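/- arXiv:1801.07242 — 9 statements merged into one kernel-verified Lean document; each statement's English description precedes it below -/
import Mathlib

section
/- Fix an integer n ≥ 1. Then 𝔏₁Φ₀ = 0, and the power series Φ₁ := ((n−1)/(24n))·(n + (n+1)·L⁻¹ − (2n+1)·L^{−(n+1)})·Φ₀ has zero constant term and satisfies 𝔏₁Φ₁ + L⁻¹·𝔏₂Φ₀ = 0. -/
/-- The operator `D = q·d/dq` on `ℚ[[q]]`. -/
noncomputable def Dq (f : PowerSeries ℚ) : PowerSeries ℚ :=
  PowerSeries.mk fun d => (d : ℚ) * PowerSeries.coeff d f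

/-- `𝔏₁ = n·Lⁿ·D + ((n−1)/2)·(Lⁿ−1)` acting on `ℚ[[q]]`. -/
noncomputable def opL1 (n : ℕ) (L f : PowerSeries ℚ) : PowerSeries ℚ :=
  PowerSeries.C (n : ℚ) * L ^ n * Dq f +
    PowerSeries.C (((n : ℚ) - 1) / 2) * (L ^ n - 1) * f

/-- `𝔏₂ = C(n,2)·Lⁿ·D² + C(n−1,2)·(Lⁿ−1)·D
      + ((n−1)(n−2)/(24n))·L^{−n}·((3n−5)·Lⁿ + n + 5)·(Lⁿ−1)` acting on `ℚ[[q]]`. -/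
noncomputable def opL2 (n : ℕ) (L f : PowerSeries ℚ) : PowerSeries ℚ :=
  PowerSeries.C (n.choose 2 : ℚ) * L ^ n * Dq (Dq f) +
    PowerSeries.C ((n - 1).choose 2 : ℚ) * (L ^ n - 1) * Dq f +
    PowerSeries.C (((n : ℚ) - 1) * ((n : ℚ) - 2) / (24 * (n : ℚ))) * (L ^ n)⁻¹ *
      (PowerSeries.C (3 * (n : ℚ) - 5) * L ^ n + PowerSeries.C ((n : ℚ) + 5)) *
      (L ^ n - 1) * f

open PowerSeries

lemma Dq_eq (f : ℚ⟦X⟧) : Dq f = PowerSeries.X * d⁄dX ℚ f := by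
  ext d
  cases d with
  | zero => simp [Dq, PowerSeries.coeff_zero_eq_constantCoeff]
  | succ k =>
    rw [Dq, PowerSeries.coeff_mk, PowerSeries.coeff_succ_X_mul, PowerSeries.coeff_derivative]
    push_cast; ring

lemma Dq_mul (f g : ℚ⟦X⟧) : Dq (f * g) = Dq f * g + f * Dq g := by
  rw [Dq_eq, Dq_eq, Dq_eq, Derivation.leibniz, smul_eq_mul, smul_eq_mul]; ring
lemma Dq_add (f g : ℚ⟦X⟧) : Dq (f + g) = Dq f + Dq g := by
  rw [Dq_eq, Dq_eq, Dq_eq, map_add]; ring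
lemma Dq_sub (f g : ℚ⟦X⟧) : Dq (f - g) = Dq f - Dq g := by
  rw [Dq_eq, Dq_eq, Dq_eq, map_sub]; ring
lemma Dq_neg (f : ℚ⟦X⟧) : Dq (-f) = -Dq f := by
  rw [Dq_eq, Dq_eq, map_neg]; ring
lemma Dq_C (r : ℚ) : Dq (PowerSeries.C r) = 0 := by
  rw [Dq_eq, PowerSeries.derivative_C, mul_zero]
lemma Dq_one : Dq 1 = 0 := by rw [Dq_eq]; simp
lemma Dq_X : Dq PowerSeries.X = PowerSeries.X := by
  rw [Dq_eq, PowerSeries.derivative_X, mul_one]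
lemma Dq_natCast (k : ℕ) : Dq (k : ℚ⟦X⟧) = 0 := by
  rw [show ((k : ℚ⟦X⟧)) = PowerSeries.C (k : ℚ) from (map_natCast _ _).symm, Dq_C]
lemma Dq_two : Dq (2 : ℚ⟦X⟧) = 0 := by
  rw [show (2:ℚ⟦X⟧) = PowerSeries.C 2 from (map_ofNat _ _).symm, Dq_C]
lemma Dq_sq (f : ℚ⟦X⟧) : Dq (f ^ 2) = 2 * f * Dq f := by
  rw [pow_two, Dq_mul]; ring
lemma Dq_cube (f : ℚ⟦X⟧) : Dq (f ^ 3) = 3 * f ^ 2 * Dq f := by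
  rw [pow_succ, Dq_mul, Dq_sq]; ring
lemma Dq_pow (f : ℚ⟦X⟧) (k : ℕ) : Dq (f ^ (k+1)) = ((k : ℚ⟦X⟧)+1) * f ^ k * Dq f := by
  induction k with
  | zero => simp
  | succ k ih => rw [pow_succ, Dq_mul, ih]; push_cast; ring
lemma Dq_inv (f : ℚ⟦X⟧) : Dq f⁻¹ = -(f⁻¹ ^ 2) * Dq f := by
  rw [Dq_eq, Dq_eq, PowerSeries.derivative_inv']; ring

lemma C_ne_zero' {a : ℚ} (ha : a ≠ 0) : PowerSeries.C a ≠ 0 :=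
  fun h => ha (by simpa using congrArg (PowerSeries.constantCoeff) h)

/-- `𝔏₁Φ₀ = 0`, and `Φ₁ = ((n−1)/(24n))·(n + (n+1)·L⁻¹ − (2n+1)·L^{−(n+1)})·Φ₀`
has zero constant term and satisfies `𝔏₁Φ₁ + L⁻¹·𝔏₂Φ₀ = 0`.
Here `L` is the unique power series with constant term `1` and `Lⁿ = 1+q`, and
`Φ₀` is the unique power series with constant term `1` and `Φ₀²·L^{n−1} = 1`. -/

theorem stmt_1 (n : ℕ) (hn : 1 ≤ n) (L Φ₀ : PowerSeries ℚ)
    (hL0 : PowerSeries.constantCoeff L = 1) (hLn : L ^ n = 1 + PowerSeries.X)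
    (hΦ₀0 : PowerSeries.constantCoeff Φ₀ = 1) (hΦ₀ : Φ₀ ^ 2 * L ^ (n - 1) = 1) :
    opL1 n L Φ₀ = 0 ∧
    PowerSeries.constantCoeff
        (PowerSeries.C (((n : ℚ) - 1) / (24 * (n : ℚ))) *
          (PowerSeries.C (n : ℚ) + PowerSeries.C ((n : ℚ) + 1) * L⁻¹ -
            PowerSeries.C (2 * (n : ℚ) + 1) * (L ^ (n + 1))⁻¹) * Φ₀) = 0 ∧
    opL1 n L
        (PowerSeries.C (((n : ℚ) - 1) / (24 * (n : ℚ))) *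
          (PowerSeries.C (n : ℚ) + PowerSeries.C ((n : ℚ) + 1) * L⁻¹ -
            PowerSeries.C (2 * (n : ℚ) + 1) * (L ^ (n + 1))⁻¹) * Φ₀) +
      L⁻¹ * opL2 n L Φ₀ = 0 := by

  obtain ⟨m, rfl⟩ : ∃ m, n = m + 1 := ⟨n - 1, (Nat.succ_pred_eq_of_pos hn).symm⟩
  have hΦ₀m : Φ₀ ^ 2 * L ^ m = 1 := by simpa [Nat.add_sub_cancel] using hΦ₀
  have hLne : L ≠ 0 := fun h => by rw [h] at hL0; simp at hL0
  have hΦne : Φ₀ ≠ 0 := fun h => by rw [h] at hΦ₀0; simp at hΦ₀0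
  have hinv : L⁻¹ * L = 1 := PowerSeries.inv_mul_cancel _ (by rw [hL0]; norm_num)
  have hP2 : Φ₀^2 * L^(m+1) = L := by linear_combination L * hΦ₀m
  have hg6 : L⁻¹ * Φ₀^2 * (1 + X) = 1 := by rw [← hLn]; linear_combination L⁻¹ * hP2 + hinv
  have hLn0 : PowerSeries.constantCoeff (L^(m+1)) ≠ 0 := by simp [map_pow, hL0]
  have hJ : (L^(m+1))⁻¹ = L⁻¹ * Φ₀^2 := by
    refine ((PowerSeries.eq_inv_iff_mul_eq_one hLn0).mpr ?_).symm
    linear_combination L⁻¹ * hP2 + hinv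
  have hLn0' : PowerSeries.constantCoeff (L^(m+1+1)) ≠ 0 := by simp [map_pow, hL0]
  have hH : (L^(m+1+1))⁻¹ = L⁻¹^2 * Φ₀^2 := by
    refine ((PowerSeries.eq_inv_iff_mul_eq_one hLn0').mpr ?_).symm
    linear_combination (L⁻¹^2*L) * hP2 + (L⁻¹*L+1) * hinv
  have hDLn : Dq (L^(m+1)) = X := by rw [hLn, Dq_add, Dq_one, Dq_X, zero_add]
  have hdL : ((m:ℚ⟦X⟧)+1) * L^m * Dq L = X := by
    have h := Dq_pow L m
    rw [hDLn] at h
    exact h.symm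
  have hE1 : 2*Φ₀*Dq Φ₀*L^(m+1) + Φ₀^2*X = Dq L := by
    have h := congrArg Dq hP2
    rw [Dq_mul, Dq_sq, hDLn] at h
    linear_combination h
  have h_e0 : 2*((m:ℚ⟦X⟧)+1) * Dq Φ₀ = -((m:ℚ⟦X⟧) * (X * L⁻¹ * Φ₀^3)) := by
    refine mul_left_cancel₀ (mul_ne_zero hΦne (pow_ne_zero (2*m+1) hLne)) ?_
    linear_combination (((m:ℚ⟦X⟧)+1)*L^m) * hE1 + hdL + ((m:ℚ⟦X⟧)*X*Φ₀^4*L^(2*m)) * hinv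
      + ((m:ℚ⟦X⟧)*X*Φ₀^2*L^m - X) * hΦ₀m
  have h_eG : ((m:ℚ⟦X⟧)+1) * Dq L⁻¹ = -(X * L⁻¹^2 * Φ₀^2) := by
    refine mul_left_cancel₀ (pow_ne_zero (m+1) hLne) ?_
    rw [Dq_inv]
    linear_combination (-(L⁻¹^2)*L) * hdL + (X*L⁻¹^2) * hP2
  have hb := congrArg Dq h_e0
  simp only [Dq_mul, Dq_neg, Dq_natCast, Dq_two, Dq_one, Dq_add, Dq_X, Dq_cube,
    zero_mul, mul_zero, zero_add, add_zero] at hb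
  have h_e00 : 4*((m:ℚ⟦X⟧)+1)^2 * Dq (Dq Φ₀) =
      -(2*(m:ℚ⟦X⟧)*((m:ℚ⟦X⟧)+1)) * (X * L⁻¹ * Φ₀^3)
      + (m:ℚ⟦X⟧)*(3*(m:ℚ⟦X⟧)+2) * (X^2 * L⁻¹^2 * Φ₀^5) := by
    linear_combination (2*((m:ℚ⟦X⟧)+1)) * hb + (-(2*(m:ℚ⟦X⟧)*X*Φ₀^3)) * h_eG
      + (-(3*(m:ℚ⟦X⟧)*X*L⁻¹*Φ₀^2)) * h_e0
  have hca : PowerSeries.C (((m+1:ℕ)):ℚ) = (m:ℚ⟦X⟧)+1 := by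
    push_cast [map_add, map_one, map_natCast]; ring
  have hcb : PowerSeries.C ((((m+1:ℕ)):ℚ) + 1) = (m:ℚ⟦X⟧)+2 := by
    push_cast [map_add, map_one, map_natCast]; ring
  have hcc : PowerSeries.C (2*(((m+1:ℕ)):ℚ) + 1) = 2*(m:ℚ⟦X⟧)+3 := by
    push_cast [map_add, map_one, map_mul, map_ofNat, map_natCast]; ring
  have hcd : PowerSeries.C (3*(((m+1:ℕ)):ℚ) - 5) = 3*(m:ℚ⟦X⟧)-2 := by
    push_cast [map_add, map_one, map_sub, map_mul, map_ofNat, map_natCast]; ring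
  have hce : PowerSeries.C ((((m+1:ℕ)):ℚ) + 5) = (m:ℚ⟦X⟧)+6 := by
    push_cast [map_add, map_one, map_ofNat, map_natCast]; ring
  have hmQ : ((m:ℚ)+1) ≠ 0 := by positivity
  have hz1 : 2 * PowerSeries.C (((((m+1:ℕ)):ℚ) - 1) / 2) = (m:ℚ⟦X⟧) := by
    have e : (2:ℚ) * (((((m+1:ℕ)):ℚ) - 1) / 2) = (m:ℚ) := by push_cast; ring
    rw [show (2:ℚ⟦X⟧) = PowerSeries.C 2 from (map_ofNat _ _).symm, ← map_mul, e, map_natCast]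
  have h24 : (24*((m:ℚ⟦X⟧)+1)) = PowerSeries.C (24*((m:ℚ)+1)) := by
    push_cast [map_add, map_one, map_mul, map_ofNat, map_natCast]; ring
  have hz2 : 24*((m:ℚ⟦X⟧)+1) * PowerSeries.C (((((m+1:ℕ)):ℚ) - 1) / (24 * (((m+1:ℕ)):ℚ)))
      = (m:ℚ⟦X⟧) := by
    have e : (24*((m:ℚ)+1)) * (((((m+1:ℕ)):ℚ) - 1) / (24 * (((m+1:ℕ)):ℚ))) = (m:ℚ) := by
      push_cast; field_simp; ring
    rw [h24, ← map_mul, e, map_natCast]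
  have hz3 : 24*((m:ℚ⟦X⟧)+1) * PowerSeries.C ((((((m+1:ℕ)):ℚ) - 1) * ((((m+1:ℕ)):ℚ) - 2)) / (24 * (((m+1:ℕ)):ℚ)))
      = (m:ℚ⟦X⟧)^2 - (m:ℚ⟦X⟧) := by
    have e : (24*((m:ℚ)+1)) * ((((((m+1:ℕ)):ℚ) - 1) * ((((m+1:ℕ)):ℚ) - 2)) / (24 * (((m+1:ℕ)):ℚ)))
        = (m:ℚ)^2 - (m:ℚ) := by
      push_cast; field_simp; ring
    rw [h24, ← map_mul, e]
    push_cast [map_sub, map_pow, map_natCast]; ring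
  have hz4 : 2 * PowerSeries.C (((m+1).choose 2 : ℚ)) = (m:ℚ⟦X⟧)^2 + (m:ℚ⟦X⟧) := by
    have e : (2:ℚ) * ((m+1).choose 2 : ℚ) = (m:ℚ)^2 + (m:ℚ) := by
      rw [Nat.cast_choose_two]; push_cast; ring
    rw [show (2:ℚ⟦X⟧) = PowerSeries.C 2 from (map_ofNat _ _).symm, ← map_mul, e]
    push_cast [map_add, map_pow, map_natCast]; ring
  have hz5 : 2 * PowerSeries.C ((m.choose 2 : ℚ)) = (m:ℚ⟦X⟧)^2 - (m:ℚ⟦X⟧) := by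
    have e : (2:ℚ) * (m.choose 2 : ℚ) = (m:ℚ)^2 - (m:ℚ) := by
      rw [Nat.cast_choose_two]; ring
    rw [show (2:ℚ⟦X⟧) = PowerSeries.C 2 from (map_ofNat _ _).symm, ← map_mul, e]
    push_cast [map_sub, map_pow, map_natCast]; ring
  have h2a : (2*((m:ℚ⟦X⟧)+1)) ≠ 0 := by
    rw [show (2*((m:ℚ⟦X⟧)+1)) = PowerSeries.C (2*((m:ℚ)+1)) from by
      push_cast [map_add, map_one, map_mul, map_ofNat, map_natCast]; ring]
    exact C_ne_zero' (by positivity)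
  have h48 : (48*((m:ℚ⟦X⟧)+1)^2) ≠ 0 := by
    rw [show (48*((m:ℚ⟦X⟧)+1)^2) = PowerSeries.C (48*((m:ℚ)+1)^2) from by
      push_cast [map_add, map_one, map_mul, map_pow, map_ofNat, map_natCast]; ring]
    exact C_ne_zero' (by positivity)
  refine ⟨?_, ?_, ?_⟩
  · simp only [opL1]
    rw [hLn, hca]
    refine mul_left_cancel₀ h2a ?_
    linear_combination ((((m:ℚ⟦X⟧)+1))*(1+X)) * h_e0 + (((m:ℚ⟦X⟧)+1)*X*Φ₀) * hz1
      + (-((m:ℚ⟦X⟧)*((m:ℚ⟦X⟧)+1)*X*Φ₀)) * hg6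
  · simp only [map_mul, map_add, map_sub, PowerSeries.constantCoeff_C,
      PowerSeries.constantCoeff_inv, map_pow, hL0, hΦ₀0, inv_one, one_pow, mul_one]
    push_cast
    ring
  · simp only [opL1, opL2, Nat.add_sub_cancel]
    rw [hH, hJ, hLn]
    simp only [Dq_mul, Dq_add, Dq_sub, Dq_C, Dq_X, Dq_sq, Dq_one,
      zero_mul, mul_zero, zero_add, add_zero]
    rw [hca, hcb, hcc, hcd, hce]
    refine mul_left_cancel₀ h48 ?_
    linear_combination (((1)*(m:ℚ⟦X⟧) + (2)*(m:ℚ⟦X⟧)^2 + (1)*(m:ℚ⟦X⟧)^3) + ((1)*(m:ℚ⟦X⟧) + (2)*(m:ℚ⟦X⟧)^2 + (1)*(m:ℚ⟦X⟧)^3)*X + ((2)*(m:ℚ⟦X⟧) + (3)*(m:ℚ⟦X⟧)^2 + (1)*(m:ℚ⟦X⟧)^3)*L⁻¹ + ((-10)*(m:ℚ⟦X⟧) + (3)*(m:ℚ⟦X⟧)^2 + (13)*(m:ℚ⟦X⟧)^3)*L⁻¹*X + ((-9)*(m:ℚ⟦X⟧) + (-15)*(m:ℚ⟦X⟧)^2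 + (-6)*(m:ℚ⟦X⟧)^3)*L⁻¹^2*Φ₀^2 + ((-9)*(m:ℚ⟦X⟧) + (-15)*(m:ℚ⟦X⟧)^2 + (-6)*(m:ℚ⟦X⟧)^3)*L⁻¹^2*Φ₀^2*X) * h_e0 +
      (((6)*(m:ℚ⟦X⟧) + (6)*(m:ℚ⟦X⟧)^2)*L⁻¹ + ((6)*(m:ℚ⟦X⟧) + (6)*(m:ℚ⟦X⟧)^2)*L⁻¹*X) * h_e00 +
      (((4)*(m:ℚ⟦X⟧) + (6)*(m:ℚ⟦X⟧)^2 + (2)*(m:ℚ⟦X⟧)^3)*Φ₀ + ((4)*(m:ℚ⟦X⟧) + (6)*(m:ℚ⟦X⟧)^2 + (2)*(m:ℚ⟦X⟧)^3)*Φ₀*X + ((-12)*(m:ℚ⟦X⟧) + (-20)*(m:ℚ⟦X⟧)^2 + (-8)*(m:ℚ⟦X⟧)^3)*L⁻¹*Φ₀^3 + ((-12)*(m:ℚ⟦X⟧) + (-20)*(m:ℚ⟦X⟧)^2 + (-8)*(m:ℚ⟦X⟧)^3)*L⁻¹*Φ₀^3*X) * h_eG +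
      (((-1)*(m:ℚ⟦X⟧)^2 + (-2)*(m:ℚ⟦X⟧)^3 + (-1)*(m:ℚ⟦X⟧)^4)*Φ₀*X + ((-2)*(m:ℚ⟦X⟧)^2 + (-3)*(m:ℚ⟦X⟧)^3 + (-1)*(m:ℚ⟦X⟧)^4)*L⁻¹*Φ₀*X + ((12)*(m:ℚ⟦X⟧) + (29)*(m:ℚ⟦X⟧)^2 + (23)*(m:ℚ⟦X⟧)^3 + (6)*(m:ℚ⟦X⟧)^4)*L⁻¹^2*Φ₀^3*X + ((12)*(m:ℚ⟦X⟧)^2 + (30)*(m:ℚ⟦X⟧)^3 + (18)*(m:ℚ⟦X⟧)^4)*L⁻¹^2*Φ₀^3*X^2) * hg6 +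
      (((1)*(m:ℚ⟦X⟧) + (2)*(m:ℚ⟦X⟧)^2 + (1)*(m:ℚ⟦X⟧)^3)*Φ₀*X + ((2)*(m:ℚ⟦X⟧) + (3)*(m:ℚ⟦X⟧)^2 + (1)*(m:ℚ⟦X⟧)^3)*L⁻¹*Φ₀*X + ((-3)*(m:ℚ⟦X⟧) + (-5)*(m:ℚ⟦X⟧)^2 + (-2)*(m:ℚ⟦X⟧)^3)*L⁻¹^2*Φ₀^3*X) * hz1 +
      (((2) + (6)*(m:ℚ⟦X⟧) + (6)*(m:ℚ⟦X⟧)^2 + (2)*(m:ℚ⟦X⟧)^3)*Dq Φ₀ + ((2) + (6)*(m:ℚ⟦X⟧) + (6)*(m:ℚ⟦X⟧)^2 + (2)*(m:ℚ⟦X⟧)^3)*X*Dq Φ₀ + ((4) + (10)*(m:ℚ⟦X⟧) + (8)*(m:ℚ⟦X⟧)^2 + (2)*(m:ℚ⟦X⟧)^3)*Φ₀*Dq L⁻¹ + ((2) + (4)*(m:ℚ⟦X⟧) + (2)*(m:ℚ⟦X⟧)^2)*Φ₀*X*(PowerSeries.C (((((m+1:ℕ)):ℚ) - 1) / 2)) +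 ((4) + (10)*(m:ℚ⟦X⟧) + (8)*(m:ℚ⟦X⟧)^2 + (2)*(m:ℚ⟦X⟧)^3)*Φ₀*X*Dq L⁻¹ + ((4) + (10)*(m:ℚ⟦X⟧) + (8)*(m:ℚ⟦X⟧)^2 + (2)*(m:ℚ⟦X⟧)^3)*L⁻¹*Dq Φ₀ + ((4) + (10)*(m:ℚ⟦X⟧) + (8)*(m:ℚ⟦X⟧)^2 + (2)*(m:ℚ⟦X⟧)^3)*L⁻¹*X*Dq Φ₀ + ((4) + (6)*(m:ℚ⟦X⟧) + (2)*(m:ℚ⟦X⟧)^2)*L⁻¹*Φ₀*X*(PowerSeries.C (((((m+1:ℕ)):ℚ) - 1) / 2)) + ((-12) + (-32)*(m:ℚ⟦X⟧) + (-28)*(m:ℚ⟦X⟧)^2 + (-8)*(m:ℚ⟦X⟧)^3)*L⁻¹*Φ₀^3*Dq L⁻¹ + ((-12) + (-32)*(m:ℚ⟦X⟧) + (-28)*(m:ℚ⟦X⟧)^2 + (-8)*(m:ℚ⟦X⟧)^3)*L⁻¹*Φ₀^3*X*Dq L⁻¹ + ((-18) + (-48)*(m:ℚ⟦X⟧) +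 (-42)*(m:ℚ⟦X⟧)^2 + (-12)*(m:ℚ⟦X⟧)^3)*L⁻¹^2*Φ₀^2*Dq Φ₀ + ((-18) + (-48)*(m:ℚ⟦X⟧) + (-42)*(m:ℚ⟦X⟧)^2 + (-12)*(m:ℚ⟦X⟧)^3)*L⁻¹^2*Φ₀^2*X*Dq Φ₀ + ((-6) + (-10)*(m:ℚ⟦X⟧) + (-4)*(m:ℚ⟦X⟧)^2)*L⁻¹^2*Φ₀^3*X*(PowerSeries.C (((((m+1:ℕ)):ℚ) - 1) / 2))) * hz2 +
      (((8) + (16)*(m:ℚ⟦X⟧) + (8)*(m:ℚ⟦X⟧)^2)*L⁻¹^2*Φ₀^3*X + ((-4) + (2)*(m:ℚ⟦X⟧) + (6)*(m:ℚ⟦X⟧)^2)*L⁻¹^2*Φ₀^3*X^2) * hz3 +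
      (((24) + (48)*(m:ℚ⟦X⟧) + (24)*(m:ℚ⟦X⟧)^2)*L⁻¹*Dq (Dq Φ₀) + ((24) + (48)*(m:ℚ⟦X⟧) + (24)*(m:ℚ⟦X⟧)^2)*L⁻¹*X*Dq (Dq Φ₀)) * hz4 +
      (((24) + (48)*(m:ℚ⟦X⟧) + (24)*(m:ℚ⟦X⟧)^2)*L⁻¹*X*Dq Φ₀) * hz5
end

section
/- Fix an integer n ≥ 1. For every m ≥ 0 the recursively defined rational functions satisfy the closed formulas H_{m,0}(u) = 1, H_{m,1}(u) = C(m,2)·(u−1)/(nu), and H_{m,2}(u) = C(m,3)·(n + ((3m−5)/4)·(u−1))·(u−1)/(n²u²) in ℚ(u). -/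
/-- Formal derivative `d/du` on `ℚ(u)`, via the quotient rule on the
numerator/denominator representation. -/
noncomputable def rderiv (r : RatFunc ℚ) : RatFunc ℚ :=
  algebraMap (Polynomial ℚ) (RatFunc ℚ)
      (Polynomial.derivative r.num * r.denom - r.num * Polynomial.derivative r.denom) /
    algebraMap (Polynomial ℚ) (RatFunc ℚ) (r.denom ^ 2)

/-- The rational functions `H_{m,j} ∈ ℚ(u)` with parameter `n`, defined by
`H_{0,0} = 1`, `H_{m,j} = 0` unless `0 ≤ j ≤ m`, and
`H_{m,j} = H_{m−1,j} + (u−1)·(d/du + (m−j)/(nu))·H_{m−1,j−1}` for `m ≥ 1`. -/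
noncomputable def Hfun (n : ℕ) : ℕ → ℕ → RatFunc ℚ
  | 0, 0 => 1
  | 0, _ + 1 => 0
  | m + 1, 0 => Hfun n m 0
  | m + 1, j + 1 =>
    if j + 1 ≤ m + 1 then
      Hfun n m (j + 1) +
        (RatFunc.X - 1) *
          (rderiv (Hfun n m j) +
            (((m : RatFunc ℚ) - (j : RatFunc ℚ)) / ((n : RatFunc ℚ) * RatFunc.X)) *
              Hfun n m j)
    else 0

instance : CharZero (RatFunc ℚ) :=
  charZero_of_injective_algebraMap (RatFunc.algebraMap_injective ℚ)

open Polynomial in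
lemma rderiv_div (p q : Polynomial ℚ) (hq : q ≠ 0) :
    rderiv (algebraMap (Polynomial ℚ) (RatFunc ℚ) p / algebraMap (Polynomial ℚ) (RatFunc ℚ) q)
      = algebraMap (Polynomial ℚ) (RatFunc ℚ) (derivative p * q - p * derivative q)
        / algebraMap (Polynomial ℚ) (RatFunc ℚ) (q ^ 2) := by
  set f := algebraMap (Polynomial ℚ) (RatFunc ℚ) with hf
  set r := f p / f q with hr
  have hq' : f q ≠ 0 := by
    simpa [hf] using (RatFunc.algebraMap_ne_zero hq)
  have hd : r.denom ≠ 0 := r.denom_ne_zero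
  have hd' : f r.denom ≠ 0 := by simpa [hf] using (RatFunc.algebraMap_ne_zero hd)
  have h1 : p * r.denom = q * r.num := by
    apply RatFunc.algebraMap_injective (K := ℚ)
    have hnd : f r.num / f r.denom = f p / f q := by rw [← hr]; exact RatFunc.num_div_denom r
    rw [div_eq_div_iff hd' hq'] at hnd
    rw [map_mul, map_mul, ← hf]
    linear_combination -hnd
  have hD := congrArg derivative h1
  rw [derivative_mul, derivative_mul] at hD
  show f _ / f (r.denom ^ 2) = f _ / f (q ^ 2)
  rw [div_eq_div_iff (by simpa [hf] using RatFunc.algebraMap_ne_zero (pow_ne_zero 2 hd))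
    (by simpa [hf] using RatFunc.algebraMap_ne_zero (pow_ne_zero 2 hq))]
  rw [← map_mul, ← map_mul]
  refine congrArg f ?_
  linear_combination -(q * r.denom) * hD + (derivative q * r.denom + q * derivative r.denom) * h1

lemma rderiv_one : rderiv 1 = 0 := by
  have h := rderiv_div 1 1 one_ne_zero
  simpa using h

open Polynomial in
lemma rderiv_form (n c : ℕ) (hn : 1 ≤ n) :
    rderiv ((c : RatFunc ℚ) * (RatFunc.X - 1) / ((n : RatFunc ℚ) * RatFunc.X))
      = (c : RatFunc ℚ) / ((n : RatFunc ℚ) * RatFunc.X ^ 2) := by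
  have hn0 : (n : ℚ) ≠ 0 := Nat.cast_ne_zero.2 (by omega)
  have hq : ((n : ℚ[X]) * X) ≠ 0 := by
    apply mul_ne_zero _ X_ne_zero
    exact Nat.cast_ne_zero.2 (by omega)
  have h := rderiv_div ((c : ℚ[X]) * (X - 1)) ((n : ℚ[X]) * X) hq
  have hmap : algebraMap ℚ[X] (RatFunc ℚ) ((c : ℚ[X]) * (X - 1))
      / algebraMap ℚ[X] (RatFunc ℚ) ((n : ℚ[X]) * X)
      = (c : RatFunc ℚ) * (RatFunc.X - 1) / ((n : RatFunc ℚ) * RatFunc.X) := by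
    simp [map_mul, map_sub]
  rw [hmap] at h
  rw [h]
  have hder : derivative ((c : ℚ[X]) * (X - 1)) * ((n : ℚ[X]) * X)
      - (c : ℚ[X]) * (X - 1) * derivative ((n : ℚ[X]) * X) = (c : ℚ[X]) * (n : ℚ[X]) := by
    simp
    ring
  rw [hder]
  have hXne : (RatFunc.X : RatFunc ℚ) ≠ 0 := RatFunc.X_ne_zero
  have hnne : ((n : RatFunc ℚ)) ≠ 0 := Nat.cast_ne_zero.2 (by omega)
  simp only [map_mul, map_pow, map_natCast, RatFunc.algebraMap_X]
  rw [div_eq_div_iff (pow_ne_zero 2 (mul_ne_zero hnne hXne)) (mul_ne_zero hnne (pow_ne_zero 2 hXne))]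
  ring

lemma choose2_cast (k : ℕ) : (k.choose 2 : RatFunc ℚ) = k * (k - 1) / 2 := by
  induction k with
  | zero => simp
  | succ k ih =>
    rw [Nat.choose_succ_succ, Nat.choose_one_right]
    push_cast
    rw [ih]
    field_simp
    ring

lemma choose3_cast (k : ℕ) : (k.choose 3 : RatFunc ℚ) = k * (k - 1) * (k - 2) / 6 := by
  induction k with
  | zero => simp
  | succ k ih =>
    rw [Nat.choose_succ_succ]
    push_cast
    rw [ih, choose2_cast]
    field_simp
    ring

/-- `H_{m,0}(u) = 1`, `H_{m,1}(u) = C(m,2)·(u−1)/(nu)`, and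
`H_{m,2}(u) = C(m,3)·(n + ((3m−5)/4)·(u−1))·(u−1)/(n²u²)`. -/
theorem stmt_4 (n : ℕ) (hn : 1 ≤ n) (m : ℕ) :
    Hfun n m 0 = 1 ∧
    Hfun n m 1 = (m.choose 2 : RatFunc ℚ) * (RatFunc.X - 1) /
      ((n : RatFunc ℚ) * RatFunc.X) ∧
    Hfun n m 2 = (m.choose 3 : RatFunc ℚ) *
        ((n : RatFunc ℚ) + ((3 * (m : RatFunc ℚ) - 5) / 4) * (RatFunc.X - 1)) *
        (RatFunc.X - 1) / ((n : RatFunc ℚ) ^ 2 * RatFunc.X ^ 2) := by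
  have hXne : (RatFunc.X : RatFunc ℚ) ≠ 0 := RatFunc.X_ne_zero
  have hnne : ((n : RatFunc ℚ)) ≠ 0 := Nat.cast_ne_zero.2 (by omega)
  induction m with
  | zero =>
    refine ⟨rfl, ?_, ?_⟩ <;> simp [Hfun]
  | succ m ih =>
    obtain ⟨ih0, ih1, ih2⟩ := ih
    refine ⟨by rw [Hfun]; exact ih0, ?_, ?_⟩
    · rw [Hfun]
      simp only [Nat.cast_zero, sub_zero, if_pos (by omega : (1:ℕ) ≤ m + 1)]
      rw [ih0, ih1, rderiv_one, choose2_cast, choose2_cast]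
      push_cast
      field_simp
      ring
    · rw [Hfun]
      by_cases hm : 2 ≤ m + 1
      · rw [if_pos hm, ih1, ih2, rderiv_form n (m.choose 2) hn,
          choose2_cast, choose3_cast, choose3_cast]
        push_cast
        field_simp
        ring
      · have hm0 : m = 0 := by omega
        subst hm0
        rw [if_neg hm]
        rw [Nat.choose_eq_zero_of_lt (by norm_num)]
        simp
end

section
/- Let n ≥ 1 and let R be the localization of ℚ[α₁,…,α_n] at the multiplicative set generated by σ_n = α₁⋯α_n and D_α = ∏_{j≠k}(α_j−α_k) (product over ordered pairs); let 𝓘·R be the ideal of R generated by the elementary symmetric polynomials σ₁,…,σ_{n−1}. For p ∈ ℤ set h(p) = Σ_{j=1}^{n} α_j^p · ∏_{k≠j}(α_j−α_k)^{−1} ∈ R (each α_j and each ∏_{k≠j}(α_j−α_k) is invertible in R; h(p) equals minus the sum of the residues of x^p·dx/∏_{k=1}^{n}(x−α_k) at x = 0 and x = ∞). Then: h(p) ∈ 𝓘·R whenever n does not divide p+1, and h(n−1+nt) − ((−1)^{n−1}σ_n)^t ∈ 𝓘·R for every t ∈ ℤ. -/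
open MvPolynomial

/-- The field of fractions `ℚ(α₁,…,α_n)` of `ℚ[α₁,…,α_n]`. -/
abbrev Knn (n : ℕ) : Type := FractionRing (MvPolynomial (Fin n) ℚ)

/-- The image of `α_j` in `ℚ(α₁,…,α_n)`. -/
noncomputable def αK (n : ℕ) (j : Fin n) : Knn n :=
  algebraMap (MvPolynomial (Fin n) ℚ) (Knn n) (X j)

/-- The image of the `r`-th elementary symmetric polynomial in `ℚ(α₁,…,α_n)`. -/
noncomputable def σK (n r : ℕ) : Knn n :=
  algebraMap (MvPolynomial (Fin n) ℚ) (Knn n) (esymm (Fin n) ℚ r)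

/-- The image of `D_α = ∏_{j≠k}(α_j−α_k)` (product over ordered pairs). -/
noncomputable def DK (n : ℕ) : Knn n :=
  algebraMap (MvPolynomial (Fin n) ℚ) (Knn n)
    (∏ p ∈ Finset.univ.filter fun p : Fin n × Fin n => p.1 ≠ p.2, (X p.1 - X p.2))

/-- `h(p) = Σ_{j=1}^{n} α_j^p · ∏_{k≠j}(α_j−α_k)⁻¹` for `p ∈ ℤ`. -/
noncomputable def hK (n : ℕ) (p : ℤ) : Knn n :=
  ∑ j : Fin n, αK n j ^ p * (∏ k ∈ Finset.univ.erase j, (αK n j - αK n k))⁻¹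

/-- Membership in the localization `R` of `ℚ[α₁,…,α_n]` at the multiplicative set
generated by `σ_n` and `D_α`, viewed inside the fraction field. -/
def memR (n : ℕ) (x : Knn n) : Prop :=
  ∃ (f : MvPolynomial (Fin n) ℚ) (a b : ℕ),
    x * (σK n n ^ a * DK n ^ b) = algebraMap (MvPolynomial (Fin n) ℚ) (Knn n) f

/-- Membership in the ideal `𝓘·R` of `R` generated by `σ₁,…,σ_{n−1}`. -/
def memI (n : ℕ) (x : Knn n) : Prop :=
  ∃ g : ℕ → Knn n, (∀ i, memR n (g i)) ∧
    x = ∑ i ∈ Finset.Icc 1 (n - 1), σK n i * g i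

noncomputable abbrev am (n : ℕ) : MvPolynomial (Fin n) ℚ →+* Knn n :=
  algebraMap (MvPolynomial (Fin n) ℚ) (Knn n)

/-- `∏_{k≠j}(α_j−α_k)`. -/
noncomputable def PK (n : ℕ) (j : Fin n) : Knn n :=
  ∏ k ∈ Finset.univ.erase j, (αK n j - αK n k)

lemma am_inj (n : ℕ) : Function.Injective (am n) :=
  IsFractionRing.injective _ _

lemma αK_ne (n : ℕ) {j k : Fin n} (h : j ≠ k) : αK n j ≠ αK n k := by
  intro hh
  exact h (MvPolynomial.X_injective (am_inj n hh))

lemma αK_injOn (n : ℕ) : Set.InjOn (αK n) (Finset.univ : Finset (Fin n)) := by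
  intro a _ b _ h
  by_contra hne
  exact αK_ne n hne h

lemma αK_ne_zero (n : ℕ) (j : Fin n) : αK n j ≠ 0 := by
  intro h
  have := am_inj n (h.trans (map_zero (am n)).symm)
  exact MvPolynomial.X_ne_zero j this

lemma PK_ne_zero (n : ℕ) (j : Fin n) : PK n j ≠ 0 := by
  refine Finset.prod_ne_zero_iff.2 fun k hk => ?_
  have : k ≠ j := (Finset.mem_erase.1 hk).1
  exact sub_ne_zero_of_ne (αK_ne n this.symm)

lemma esymm_top (n : ℕ) : esymm (Fin n) ℚ n = ∏ i, X i := by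
  rw [esymm]
  have h : (Finset.univ : Finset (Fin n)).powersetCard n = {Finset.univ} := by
    ext t
    simp only [Finset.mem_powersetCard, Finset.mem_singleton]
    constructor
    · rintro ⟨-, hc⟩; exact Finset.eq_univ_of_card t (by simp [hc])
    · rintro rfl; simp
  rw [h, Finset.sum_singleton]

lemma σK_top (n : ℕ) : σK n n = ∏ k, αK n k := by
  rw [σK, esymm_top, map_prod]; rfl

lemma σK_zero (n : ℕ) : σK n 0 = 1 := by
  rw [σK, esymm_zero, map_one]

lemma σK_ne_zero (n : ℕ) : σK n n ≠ 0 := by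
  rw [σK_top]
  exact Finset.prod_ne_zero_iff.2 fun k _ => αK_ne_zero n k

lemma DK_eq (n : ℕ) : DK n = ∏ j, PK n j := by
  rw [DK, map_prod]
  simp only [map_sub]
  rw [Finset.prod_filter, Fintype.prod_prod_type]
  refine Finset.prod_congr rfl fun j _ => ?_
  rw [PK, ← Finset.filter_ne' Finset.univ j, Finset.prod_filter]
  refine Finset.prod_congr rfl fun k _ => ?_
  by_cases h : j = k <;> simp [h, αK, Ne, eq_comm]

lemma hK_eq (n : ℕ) (p : ℤ) : hK n p = ∑ j : Fin n, αK n j ^ p * (PK n j)⁻¹ := rfl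

/-! ### R-membership API -/

lemma memR_am (n : ℕ) (f : MvPolynomial (Fin n) ℚ) : memR n (am n f) :=
  ⟨f, 0, 0, by simp [am]⟩

lemma memR_zero (n : ℕ) : memR n 0 := by
  simpa using memR_am n 0

lemma memR_one (n : ℕ) : memR n 1 := by
  simpa using memR_am n 1

lemma memR_mul (n : ℕ) {x y : Knn n} (hx : memR n x) (hy : memR n y) : memR n (x * y) := by
  obtain ⟨f, a, b, hf⟩ := hx
  obtain ⟨g, c, d, hg⟩ := hy
  exact ⟨f * g, a + c, b + d, by rw [map_mul, ← hf, ← hg]; ring⟩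

lemma σDK_am (n : ℕ) (a b : ℕ) : ∃ w : MvPolynomial (Fin n) ℚ,
    σK n n ^ a * DK n ^ b = am n w := by
  refine ⟨esymm (Fin n) ℚ n ^ a *
    (∏ p ∈ Finset.univ.filter fun p : Fin n × Fin n => p.1 ≠ p.2, (X p.1 - X p.2)) ^ b, ?_⟩
  rw [map_mul, map_pow, map_pow]; rfl

lemma memR_add (n : ℕ) {x y : Knn n} (hx : memR n x) (hy : memR n y) : memR n (x + y) := by
  obtain ⟨f, a, b, hf⟩ := hx
  obtain ⟨g, c, d, hg⟩ := hy
  obtain ⟨w1, hw1⟩ := σDK_am n c d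
  obtain ⟨w2, hw2⟩ := σDK_am n a b
  refine ⟨f * w1 + g * w2, a + c, b + d, ?_⟩
  have : (x + y) * (σK n n ^ (a + c) * DK n ^ (b + d)) =
      (x * (σK n n ^ a * DK n ^ b)) * (σK n n ^ c * DK n ^ d)
      + (y * (σK n n ^ c * DK n ^ d)) * (σK n n ^ a * DK n ^ b) := by ring
  rw [this, hf, hg, hw1, hw2, map_add, map_mul, map_mul]

lemma memR_neg (n : ℕ) {x : Knn n} (hx : memR n x) : memR n (-x) := by
  obtain ⟨f, a, b, hf⟩ := hx
  exact ⟨-f, a, b, by rw [map_neg, ← hf]; ring⟩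

lemma memR_pow (n : ℕ) {x : Knn n} (hx : memR n x) (m : ℕ) : memR n (x ^ m) := by
  induction m with
  | zero => simpa using memR_one n
  | succ k ih => rw [pow_succ]; exact memR_mul n ih hx

lemma memR_σ (n r : ℕ) : memR n (σK n r) := memR_am n _

lemma memR_inv_σn (n : ℕ) : memR n (σK n n)⁻¹ :=
  ⟨1, 1, 0, by rw [pow_one, pow_zero, mul_one, inv_mul_cancel₀ (σK_ne_zero n), map_one]⟩

noncomputable def uK (n : ℕ) : Knn n := (-1 : Knn n) ^ (n - 1) * σK n n

lemma uK_ne_zero (n : ℕ) : uK n ≠ 0 := by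
  apply mul_ne_zero _ (σK_ne_zero n)
  exact pow_ne_zero _ (by norm_num)

lemma memR_uK (n : ℕ) : memR n (uK n) := by
  apply memR_mul
  · have : ((-1 : Knn n) ^ (n - 1)) = am n ((-1) ^ (n - 1)) := by
      rw [map_pow, map_neg, map_one]
    rw [this]; exact memR_am n _
  · exact memR_σ n n

lemma memR_inv_uK (n : ℕ) : memR n (uK n)⁻¹ := by
  rw [uK, mul_inv]
  apply memR_mul _ _ (memR_inv_σn n)
  rcases Nat.even_or_odd (n - 1) with h | h
  · rw [h.neg_one_pow]; simpa using memR_one n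
  · rw [h.neg_one_pow]
    rw [show ((-1 : Knn n))⁻¹ = -1 by norm_num]
    exact memR_neg n (memR_one n)

lemma memR_zpow_uK (n : ℕ) (t : ℤ) : memR n (uK n ^ t) := by
  rcases t with m | m
  · rw [Int.ofNat_eq_coe, zpow_natCast]; exact memR_pow n (memR_uK n) m
  · rw [zpow_negSucc]
    rw [← inv_pow]
    exact memR_pow n (memR_inv_uK n) (m + 1)

lemma PK_am (n : ℕ) (j : Fin n) :
    PK n j = am n (∏ k ∈ Finset.univ.erase j, (X j - X k)) := by
  rw [map_prod]
  exact Finset.prod_congr rfl fun k _ => by rw [map_sub]; rfl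

lemma memR_hK (n : ℕ) (p : ℤ) : memR n (hK n p) := by
  set a : ℕ := (-p).toNat with ha
  have hpa : (0 : ℤ) ≤ p + a := by
    have : (-p : ℤ) ≤ a := Int.self_le_toNat _
    omega
  refine ⟨∑ j : Fin n, (X j ^ (p + a).toNat * ∏ k ∈ Finset.univ.erase j, X k ^ a)
      * ∏ k ∈ Finset.univ.erase j, (∏ l ∈ Finset.univ.erase k, (X k - X l)), a, 1, ?_⟩
  rw [hK_eq, Finset.sum_mul, map_sum]
  refine Finset.sum_congr rfl fun j _ => ?_
  have h1 : αK n j ^ p * σK n n ^ a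
      = am n (X j ^ (p + a).toNat * ∏ k ∈ Finset.univ.erase j, X k ^ a) := by
    rw [σK_top, ← Finset.prod_pow, ← Finset.mul_prod_erase _ _ (Finset.mem_univ j),
      ← mul_assoc, ← zpow_natCast (αK n j) a, ← zpow_add₀ (αK_ne_zero n j),
      ← Int.toNat_of_nonneg hpa, zpow_natCast, map_mul, map_pow, map_prod]
    simp only [map_pow]
    rfl
  have h2 : (PK n j)⁻¹ * DK n ^ 1
      = am n (∏ k ∈ Finset.univ.erase j, (∏ l ∈ Finset.univ.erase k, (X k - X l))) := by
    rw [pow_one, DK_eq, ← Finset.mul_prod_erase _ _ (Finset.mem_univ j),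
      inv_mul_cancel_left₀ (PK_ne_zero n j), map_prod]
    exact Finset.prod_congr rfl fun k _ => PK_am n k
  calc αK n j ^ p * (PK n j)⁻¹ * (σK n n ^ a * DK n ^ 1)
      = (αK n j ^ p * σK n n ^ a) * ((PK n j)⁻¹ * DK n ^ 1) := by ring
    _ = _ := by rw [h1, h2, ← map_mul]

/-! ### I-membership API -/

lemma memI_zero (n : ℕ) : memI n 0 :=
  ⟨fun _ => 0, fun _ => memR_zero n, by simp⟩

lemma memI_add (n : ℕ) {x y : Knn n} (hx : memI n x) (hy : memI n y) : memI n (x + y) := by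
  obtain ⟨g, hg, rfl⟩ := hx
  obtain ⟨g', hg', rfl⟩ := hy
  refine ⟨fun i => g i + g' i, fun i => memR_add n (hg i) (hg' i), ?_⟩
  rw [← Finset.sum_add_distrib]
  exact Finset.sum_congr rfl fun i _ => by ring

lemma memI_mul (n : ℕ) {r x : Knn n} (hr : memR n r) (hx : memI n x) : memI n (r * x) := by
  obtain ⟨g, hg, rfl⟩ := hx
  refine ⟨fun i => r * g i, fun i => memR_mul n hr (hg i), ?_⟩
  rw [Finset.mul_sum]
  exact Finset.sum_congr rfl fun i _ => by ring

lemma memI_neg (n : ℕ) {x : Knn n} (hx : memI n x) : memI n (-x) := by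
  have := memI_mul n (memR_neg n (memR_one n)) hx
  simpa using this

lemma memI_sub (n : ℕ) {x y : Knn n} (hx : memI n x) (hy : memI n y) : memI n (x - y) := by
  rw [sub_eq_add_neg]; exact memI_add n hx (memI_neg n hy)

lemma memI_sum (n : ℕ) {s : Finset ℕ} {f : ℕ → Knn n} (h : ∀ i ∈ s, memI n (f i)) :
    memI n (∑ i ∈ s, f i) := by
  classical
  induction s using Finset.induction_on with
  | empty => simpa using memI_zero n
  | insert _ _ hnot ih =>
    rw [Finset.sum_insert hnot]
    exact memI_add n (h _ (Finset.mem_insert_self _ _))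
      (ih fun i hi => h i (Finset.mem_insert_of_mem hi))

lemma memI_σ_mul (n : ℕ) {i : ℕ} (hi : i ∈ Finset.Icc 1 (n - 1)) {r : Knn n}
    (hr : memR n r) : memI n (σK n i * r) := by
  classical
  refine ⟨fun i' => if i' = i then r else 0, fun i' => ?_, ?_⟩
  · by_cases h : i' = i <;> simp [h, hr, memR_zero n]
  · rw [Finset.sum_eq_single i]
    · simp
    · intro b _ hb; simp [hb]
    · intro h; exact absurd hi h

/-! ### Lagrange base case -/

lemma nodalWeight_eq (n : ℕ) (j : Fin n) :
    Lagrange.nodalWeight Finset.univ (αK n) j = (PK n j)⁻¹ := by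
  rw [Lagrange.nodalWeight, PK, ← Finset.prod_inv_distrib]

lemma basis_coeff (n : ℕ) (hn : 1 ≤ n) (j : Fin n) :
    (Lagrange.basis Finset.univ (αK n) j).coeff (n - 1) = (PK n j)⁻¹ := by
  rw [Lagrange.basis_eq_prod_sub_inv_mul_nodal_div (Finset.mem_univ j),
    ← Lagrange.nodal_erase_eq_nodal_div (Finset.mem_univ j), Polynomial.coeff_C_mul]
  have hdeg : (Lagrange.nodal (Finset.univ.erase j) (αK n)).natDegree = n - 1 := by
    rw [Lagrange.natDegree_nodal, Finset.card_erase_of_mem (Finset.mem_univ j)]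
    simp
  rw [← hdeg, Polynomial.Monic.coeff_natDegree Lagrange.nodal_monic, mul_one,
    nodalWeight_eq]

lemma hK_base (n : ℕ) (hn : 1 ≤ n) (s : ℕ) (hs : s < n) :
    hK n s = if s = n - 1 then 1 else 0 := by
  classical
  have hdeg : (Polynomial.X ^ s : Polynomial (Knn n)).degree
      < (Finset.univ : Finset (Fin n)).card := by
    rw [Polynomial.degree_X_pow]
    simp only [Finset.card_univ, Fintype.card_fin]
    exact_mod_cast hs
  have hint := Lagrange.eq_interpolate (f := (Polynomial.X ^ s : Polynomial (Knn n)))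
    (αK_injOn n) hdeg
  have hco := congrArg (fun q => Polynomial.coeff q (n - 1)) hint
  simp only [Lagrange.interpolate_apply, Polynomial.finset_sum_coeff,
    Polynomial.coeff_C_mul, Polynomial.eval_pow, Polynomial.eval_X,
    Polynomial.coeff_X_pow] at hco
  rw [hK_eq]
  have : ∀ j : Fin n, αK n j ^ (s : ℤ) * (PK n j)⁻¹
      = αK n j ^ s * (Lagrange.basis Finset.univ (αK n) j).coeff (n - 1) := by
    intro j
    rw [basis_coeff n hn j, zpow_natCast]
  rw [Finset.sum_congr rfl fun j _ => this j, ← hco]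
  by_cases h : s = n - 1
  · simp [h]
  · have : ¬ (n - 1 = s) := fun hh => h hh.symm
    simp [h, this]

/-! ### Vieta and the recurrence -/

lemma σK_esymm_multiset (n r : ℕ) :
    σK n r = (Multiset.map (αK n) (Finset.univ : Finset (Fin n)).val).esymm r := by
  rw [Finset.esymm_map_val, σK, esymm, map_sum]
  refine Finset.sum_congr rfl fun t _ => ?_
  rw [map_prod]
  rfl

lemma vieta_at (n : ℕ) (j : Fin n) :
    ∑ r ∈ Finset.range (n + 1), (-1 : Knn n) ^ r * σK n r * αK n j ^ (n - r) = 0 := by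
  classical
  set ms : Multiset (Knn n) := Multiset.map (αK n) (Finset.univ : Finset (Fin n)).val with hms
  have hcard : Multiset.card ms = n := by simp [hms]
  have hvieta := Multiset.prod_X_sub_X_eq_sum_esymm ms
  have heval := congrArg (Polynomial.eval (αK n j)) hvieta
  have hL : Polynomial.eval (αK n j) (Multiset.map (fun t => Polynomial.X - Polynomial.C t) ms).prod = 0 := by
    have : (Multiset.map (fun t => Polynomial.X - Polynomial.C t) ms).prod
        = ∏ k : Fin n, (Polynomial.X - Polynomial.C (αK n k)) := by
      rw [Finset.prod_eq_multiset_prod, hms, Multiset.map_map]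
      rfl
    rw [this, Polynomial.eval_prod]
    exact Finset.prod_eq_zero (Finset.mem_univ j) (by simp)
  rw [hL] at heval
  rw [hcard] at heval
  symm
  rw [heval, Polynomial.eval_finset_sum]
  refine Finset.sum_congr rfl fun r _ => ?_
  rw [σK_esymm_multiset n r, ← hms]
  simp [mul_assoc]

lemma recurrence (n : ℕ) (p : ℤ) :
    ∑ r ∈ Finset.range (n + 1), (-1 : Knn n) ^ r * σK n r * hK n (p + n - r) = 0 := by
  simp only [hK_eq, Finset.mul_sum]
  rw [Finset.sum_comm]
  refine Finset.sum_eq_zero fun j _ => ?_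
  have key : ∀ r ∈ Finset.range (n + 1),
      (-1 : Knn n) ^ r * σK n r * (αK n j ^ (p + n - r) * (PK n j)⁻¹)
      = ((-1 : Knn n) ^ r * σK n r * αK n j ^ (n - r)) * (αK n j ^ p * (PK n j)⁻¹) := by
    intro r hr
    have hrn : r ≤ n := Nat.lt_succ_iff.mp (Finset.mem_range.mp hr)
    have hcast : p + (n : ℤ) - r = p + ((n - r : ℕ) : ℤ) := by
      push_cast [hrn]
      ring
    rw [hcast, zpow_add₀ (αK_ne_zero n j), zpow_natCast]
    ring
  rw [Finset.sum_congr rfl key, ← Finset.sum_mul, vieta_at n j, zero_mul]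

lemma memR_neg_one_pow (n r : ℕ) : memR n ((-1 : Knn n) ^ r) := by
  have : ((-1 : Knn n) ^ r) = am n ((-1) ^ r) := by rw [map_pow, map_neg, map_one]
  rw [this]; exact memR_am n _

lemma key_step (n : ℕ) (hn : 1 ≤ n) (p : ℤ) :
    memI n (hK n (p + n) - uK n * hK n p) := by
  obtain ⟨m, rfl⟩ : ∃ m, n = m + 1 := ⟨n - 1, by omega⟩
  set F : ℕ → Knn (m + 1) := fun r =>
    (-1 : Knn (m + 1)) ^ r * σK (m + 1) r * hK (m + 1) (p + (m + 1 : ℕ) - r) with hF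
  have hrec : ∑ r ∈ Finset.range (m + 1 + 1), F r = 0 := recurrence (m + 1) p
  rw [Finset.sum_range_succ', Finset.sum_range_succ] at hrec
  -- hrec : (∑ i ∈ range m, F (i+1) + F (m+1)) + F 0 = 0
  have hF0 : F 0 = hK (m + 1) (p + (m + 1 : ℕ)) := by
    simp [hF, σK_zero]
  have hFtop : F (m + 1) = -(uK (m + 1) * hK (m + 1) p) := by
    have harg : (p + ((m + 1 : ℕ) : ℤ) - ((m + 1 : ℕ) : ℤ)) = p := by ring
    rw [hF]
    simp only [harg]
    rw [uK]
    have : (m + 1) - 1 = m := by omega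
    rw [this, pow_succ]
    ring
  refine ⟨fun i => -((-1 : Knn (m + 1)) ^ i) * hK (m + 1) (p + (m + 1 : ℕ) - i),
    fun i => memR_mul _ (memR_neg _ (memR_neg_one_pow _ i)) (memR_hK _ _), ?_⟩
  have hIcc : ∑ i ∈ Finset.Icc 1 ((m + 1) - 1),
      σK (m + 1) i * (-((-1 : Knn (m + 1)) ^ i) * hK (m + 1) (p + (m + 1 : ℕ) - i))
      = ∑ i ∈ Finset.range m, -F (i + 1) := by
    have : (m + 1) - 1 = m := by omega
    rw [this, ← Finset.Ico_add_one_right_eq_Icc, Finset.sum_Ico_eq_sum_range]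
    refine Finset.sum_congr (by simp) fun i _ => ?_
    rw [hF, Nat.add_comm 1 i]
    push_cast
    ring
  rw [hIcc, Finset.sum_neg_distrib]
  have : ∑ i ∈ Finset.range m, F (i + 1) = -(F (m + 1)) - F 0 := by
    linear_combination hrec
  rw [this, hF0, hFtop]
  ring

lemma hmono (n : ℕ) (hn : 1 ≤ n) (q : ℤ) (hq : memI n (hK n q)) : memI n (hK n (q + n)) := by
  have : hK n (q + n) = (hK n (q + n) - uK n * hK n q) + uK n * hK n q := by ring
  rw [this]
  exact memI_add n (key_step n hn q) (memI_mul n (memR_uK n) hq)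

lemma hmono' (n : ℕ) (hn : 1 ≤ n) (q : ℤ) (hq : memI n (hK n (q + n))) : memI n (hK n q) := by
  have hu := uK_ne_zero n
  have : hK n q = (uK n)⁻¹ * hK n (q + n)
      - (uK n)⁻¹ * (hK n (q + n) - uK n * hK n q) := by
    have e : (uK n)⁻¹ * uK n = 1 := inv_mul_cancel₀ hu
    linear_combination (-(hK n q)) * e
  rw [this]
  exact memI_sub n (memI_mul n (memR_inv_uK n) hq)
    (memI_mul n (memR_inv_uK n) (key_step n hn q))
lemma main_ind (n : ℕ) (hn : 1 ≤ n) (t : ℤ) :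
    (∀ s : ℕ, s + 1 < n → memI n (hK n (s + n * t))) ∧
    memI n (hK n (((n - 1 : ℕ) : ℤ) + n * t) - uK n ^ t) := by
  induction t using Int.induction_on with
  | zero =>
    constructor
    · intro s hs
      rw [show ((s : ℤ) + n * 0) = (s : ℤ) by ring, hK_base n hn s (by omega),
        if_neg (by omega)]
      exact memI_zero n
    · rw [show (((n - 1 : ℕ) : ℤ) + n * 0) = ((n - 1 : ℕ) : ℤ) by ring,
        hK_base n hn (n - 1) (by omega), if_pos rfl, zpow_zero, sub_self]
      exact memI_zero n
  | succ t ih =>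
    constructor
    · intro s hs
      rw [show ((s : ℤ) + n * (t + 1)) = ((s : ℤ) + n * t) + n by ring]
      exact hmono n hn _ (ih.1 s hs)
    · rw [show (((n - 1 : ℕ) : ℤ) + n * (t + 1)) = (((n - 1 : ℕ) : ℤ) + n * t) + n by ring,
        zpow_add_one₀ (uK_ne_zero n)]
      have : hK n ((((n - 1 : ℕ) : ℤ) + n * t) + n) - uK n ^ (t : ℤ) * uK n
          = (hK n ((((n - 1 : ℕ) : ℤ) + n * t) + n)
            - uK n * hK n (((n - 1 : ℕ) : ℤ) + n * t))
            + uK n * (hK n (((n - 1 : ℕ) : ℤ) + n * t) - uK n ^ (t : ℤ)) := by ring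
      rw [this]
      exact memI_add n (key_step n hn _) (memI_mul n (memR_uK n) ih.2)
  | pred t ih =>
    constructor
    · intro s hs
      apply hmono' n hn
      rw [show ((s : ℤ) + n * (-t - 1)) + n = (s : ℤ) + n * (-t) by ring]
      exact ih.1 s hs
    · have hu := uK_ne_zero n
      have hzp : uK n ^ (-t - 1 : ℤ) = uK n ^ (-t : ℤ) * (uK n)⁻¹ :=
        zpow_sub_one₀ hu (-t)
      have harg : ((((n - 1 : ℕ) : ℤ) + n * (-t - 1))) + n
          = (((n - 1 : ℕ) : ℤ) + n * (-t)) := by ring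
      have key : hK n ((((n - 1 : ℕ) : ℤ) + n * (-t - 1))) - uK n ^ (-t - 1 : ℤ)
          = (uK n)⁻¹ * (hK n (((((n - 1 : ℕ) : ℤ) + n * (-t - 1))) + n) - uK n ^ (-t : ℤ))
            - (uK n)⁻¹ * (hK n (((((n - 1 : ℕ) : ℤ) + n * (-t - 1))) + n)
              - uK n * hK n ((((n - 1 : ℕ) : ℤ) + n * (-t - 1)))) := by
        rw [hzp]
        have e : (uK n)⁻¹ * uK n = 1 := inv_mul_cancel₀ hu
        linear_combination (-(hK n ((((n - 1 : ℕ) : ℤ) + n * (-t - 1))))) * e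
      have ih2' : memI n (hK n (((((n - 1 : ℕ) : ℤ) + n * (-t - 1))) + n) - uK n ^ (-t : ℤ)) := by
        rw [harg]; exact ih.2
      rw [key]
      exact memI_sub n (memI_mul n (memR_inv_uK n) ih2')
        (memI_mul n (memR_inv_uK n) (key_step n hn _))
/-- `h(p) ∈ 𝓘·R` whenever `n ∤ p+1`, and `h(n−1+nt) − ((−1)^{n−1}σ_n)^t ∈ 𝓘·R`
for every `t ∈ ℤ`. -/
theorem stmt_8 (n : ℕ) (hn : 1 ≤ n) :
    (∀ p : ℤ, ¬ ((n : ℤ) ∣ p + 1) → memI n (hK n p)) ∧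
    (∀ t : ℤ, memI n (hK n ((n : ℤ) - 1 + n * t) -
        ((-1 : Knn n) ^ (n - 1) * σK n n) ^ t)) := by
  constructor
  · intro p hdvd
    have hn0 : (0 : ℤ) < n := by exact_mod_cast hn
    set t := p / n with ht
    set s := (p % n).toNat with hs
    have hmod : ((s : ℤ)) = p % n := Int.toNat_of_nonneg (Int.emod_nonneg p (by omega))
    have hslt : (s : ℤ) < n := by rw [hmod]; exact Int.emod_lt_of_pos p hn0
    have hp : (s : ℤ) + n * t = p := by
      rw [hmod, ht]
      linear_combination Int.mul_ediv_add_emod p n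
    have hsne : s + 1 < n := by
      rcases Nat.lt_or_ge (s + 1) n with h | h
      · exact h
      · exfalso
        apply hdvd
        refine ⟨t + 1, ?_⟩
        have hseq : (s : ℤ) = n - 1 := by omega
        linear_combination -hp + hseq
    have := (main_ind n hn t).1 s hsne
    rwa [hp] at this
  · intro t
    have := (main_ind n hn t).2
    have harg : (((n - 1 : ℕ) : ℤ) + n * t) = (n : ℤ) - 1 + n * t := by
      have h1 : ((n - 1 : ℕ) : ℤ) = (n : ℤ) - 1 := by omega
      rw [h1]
    rwa [harg] at this
end

section
/- Let n ≥ 1, let Λ = ℚ[α₁,…,α_n]^{S_n} be the ring of symmetric polynomials, and let 𝓘 ⊂ Λ be the ideal generated by the elementary symmetric polynomials σ₁,…,σ_{n−1}. Then no power of σ_n·D_α lies in 𝓘: for every k ∈ ℕ, (σ_n·D_α)^k ∉ 𝓘. -/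
open MvPolynomial

/-- Let `Λ = ℚ[α₁,…,α_n]^{S_n}` and let `𝓘 ⊂ Λ` be the ideal generated by the
elementary symmetric polynomials `σ₁,…,σ_{n−1}`.  Then no power of `σ_n·D_α`
lies in `𝓘`, where `D_α = ∏_{j≠k}(α_j−α_k)` (product over ordered pairs).
Membership in `𝓘` is spelled out: an element of `Λ` lies in `𝓘` iff it can be
written as `Σ_{i=1}^{n-1} σ_i·f_i` with each `f_i` symmetric. -/
theorem stmt_9 (n : ℕ) (hn : 1 ≤ n) (k : ℕ) :
    ¬ ∃ f : Fin (n - 1) → MvPolynomial (Fin n) ℚ,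
        (∀ i, (f i).IsSymmetric) ∧
        ((esymm (Fin n) ℚ n *
            ∏ p ∈ Finset.univ.filter fun p : Fin n × Fin n => p.1 ≠ p.2,
              (X p.1 - X p.2)) ^ k =
          ∑ i : Fin (n - 1), esymm (Fin n) ℚ ((i : ℕ) + 1) * f i) := by
  rintro ⟨f, -, heq⟩
  have hn0 : n ≠ 0 := by omega
  set ζ : ℂ := Complex.exp (2 * Real.pi * Complex.I / n) with hζdef
  have hζ : IsPrimitiveRoot ζ n := Complex.isPrimitiveRoot_exp n hn0
  set v : Fin n → ℂ := fun i => ζ ^ (i : ℕ) with hv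
  set s : Multiset ℂ := Finset.univ.val.map v with hs
  -- `s` is the multiset of all n-th roots of unity
  have huniv : (Finset.univ.val : Multiset (Fin n)).map (Fin.val) = Multiset.range n := by
    have h0 : (Finset.univ.val : Multiset (Fin n)) = ↑(List.finRange n) := rfl
    rw [h0, Multiset.map_coe, show (List.finRange n).map Fin.val = List.range n from
      List.ext_getElem (by simp) (by simp)]
    rfl
  have hs' : s = Polynomial.nthRoots n (1 : ℂ) := by
    rw [hζ.nthRoots_eq (one_pow n), hs, hv]
    rw [show (Finset.univ.val : Multiset (Fin n)).map (fun i : Fin n => ζ ^ (i : ℕ))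
        = ((Finset.univ.val : Multiset (Fin n)).map (Fin.val)).map (fun i : ℕ => ζ ^ i) by
      rw [Multiset.map_map]; rfl, huniv]
    simp
  have hcard : Multiset.card s = n := by
    simp [hs]
  have hroots : (Polynomial.X ^ n - Polynomial.C 1 : Polynomial ℂ).roots = s := by
    rw [hs']; rfl
  have hmonic : (Polynomial.X ^ n - Polynomial.C 1 : Polynomial ℂ).Monic :=
    Polynomial.monic_X_pow_sub_C (1 : ℂ) hn0
  have hdeg : (Polynomial.X ^ n - Polynomial.C 1 : Polynomial ℂ).natDegree = n :=
    Polynomial.natDegree_X_pow_sub_C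
  have hP : (s.map fun a => Polynomial.X - Polynomial.C a).prod
      = Polynomial.X ^ n - Polynomial.C 1 := by
    rw [← hroots]
    exact Polynomial.prod_multiset_X_sub_C_of_monic_of_roots_card_eq hmonic
      (by rw [hroots, hcard, hdeg])
  -- esymm values of s
  have hesymm : ∀ m : ℕ, 1 ≤ m → m ≤ n →
      (-1 : ℂ) ^ m * s.esymm m
        = (Polynomial.X ^ n - Polynomial.C 1 : Polynomial ℂ).coeff (n - m) := by
    intro m hm1 hmn
    have h := Multiset.prod_X_sub_C_coeff s (k := n - m) (by omega : n - m ≤ Multiset.card s)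
    rw [hP] at h
    rw [hcard] at h
    rw [show n - (n - m) = m by omega] at h
    exact h.symm
  have hzero : ∀ m : ℕ, 1 ≤ m → m < n → s.esymm m = 0 := by
    intro m hm1 hmn
    have h := hesymm m hm1 (le_of_lt hmn)
    have hc : (Polynomial.X ^ n - Polynomial.C 1 : Polynomial ℂ).coeff (n - m) = 0 := by
      rw [Polynomial.coeff_sub, Polynomial.coeff_X_pow, Polynomial.coeff_C]
      have : n - m ≠ n := by omega
      have : ¬ (n - m = n) := by omega
      have h0 : ¬ (n - m = 0) := by omega
      simp_all
    rw [hc] at h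
    have hne : ((-1 : ℂ) ^ m) ≠ 0 := by
      simp
    exact (mul_eq_zero.mp h).resolve_left hne
  have hn_ne : s.esymm n ≠ 0 := by
    intro h0
    have h := hesymm n hn le_rfl
    rw [h0, mul_zero, Nat.sub_self] at h
    have hc : (Polynomial.X ^ n - Polynomial.C 1 : Polynomial ℂ).coeff 0 = -1 := by
      rw [Polynomial.coeff_sub, Polynomial.coeff_X_pow, Polynomial.coeff_C]
      simp [hn0]
      omega
    rw [hc] at h
    norm_num at h
  -- apply aeval v to the equation
  have happ := congrArg (aeval v) heq
  rw [map_pow, map_mul, map_sum] at happ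
  rw [aeval_esymm_eq_multiset_esymm] at happ
  rw [← hs] at happ
  have hRHS : ∑ i : Fin (n - 1), (aeval v) (esymm (Fin n) ℚ ((i : ℕ) + 1) * f i) = 0 := by
    apply Finset.sum_eq_zero
    intro i _
    rw [map_mul, aeval_esymm_eq_multiset_esymm, ← hs,
      hzero ((i : ℕ) + 1) (by omega) (by have := i.isLt; omega), zero_mul]
  rw [hRHS] at happ
  have hD : (aeval v) ((∏ p ∈ Finset.univ.filter fun p : Fin n × Fin n => p.1 ≠ p.2,
      (X p.1 - X p.2) : MvPolynomial (Fin n) ℚ)) ≠ 0 := by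
    rw [map_prod]
    apply Finset.prod_ne_zero_iff.mpr
    intro p hp
    rw [Finset.mem_filter] at hp
    rw [map_sub, aeval_X, aeval_X]
    intro habs
    exact hp.2 (Fin.ext (hζ.pow_inj p.1.isLt p.2.isLt (sub_eq_zero.mp habs)))
  exact pow_ne_zero k (mul_ne_zero hn_ne hD) happ
end

section
/- Let g, N ∈ ℕ with 2g + N ≥ 3 and let Γ be a connected trivalent N-marked graph of genus g with vertex set Ver. For a family c = (c_v)_{v∈Ver} of finitely supported functions c_v: {1,2,3,…} → ℕ, set |c_v| = Σ_{r≥1} c_{v,r} and ‖c‖ = Σ_{v∈Ver} Σ_{r≥1} r·c_{v,r}. Then the family of nonnegative reals 2^{−‖c‖} · ∏_{v∈Ver} [ ((m_v(Γ)+|c_v|)! / (m_v(Γ)! · ∏_{r≥1} c_{v,r}!)) · ∏_{r≥1} (r+1)^{−c_{v,r}} ], indexed by all such families c, is summable with sum (2(1−ln 2))^{−(3g+N−2−g_Γ)}. -/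
/-- An `N`-marked graph: finite sets of vertices (`Fin nv`) and flags (`Fin nf`),
a genus function `γ`, an attaching map `η` on markings and flags, and a
partition `Edg` of the flags into two-element subsets (the edges). -/
structure MarkedGraph (N : ℕ) where
  nv : ℕ
  nf : ℕ
  γ : Fin nv → ℕ
  η : Fin N ⊕ Fin nf → Fin nv
  Edg : Finset (Finset (Fin nf))
  card_eq_two : ∀ e ∈ Edg, e.card = 2
  partition : ∀ f : Fin nf, ∃! e, e ∈ Edg ∧ f ∈ e

namespace MarkedGraph

variable {N : ℕ} (Γ : MarkedGraph N)

/-- `F̄_v(Γ) = η⁻¹(v)`, the markings and flags at a vertex `v`. -/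
def flagsAt (v : Fin Γ.nv) : Finset (Fin N ⊕ Fin Γ.nf) :=
  Finset.univ.filter fun x => Γ.η x = v

/-- Two vertices are adjacent if some edge has flags at both of them. -/
def Adj (v v' : Fin Γ.nv) : Prop :=
  ∃ e ∈ Γ.Edg, ∃ f ∈ e, ∃ f' ∈ e, Γ.η (Sum.inr f) = v ∧ Γ.η (Sum.inr f') = v'

/-- Any two distinct vertices are joined by a chain of edges. -/
def Connected : Prop :=
  ∀ v v' : Fin Γ.nv, v ≠ v' → Relation.ReflTransGen Γ.Adj v v'

/-- `val_Γ(v) = 2(γ(v)−1) + |F̄_v(Γ)| > 0` for every vertex `v`. -/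
def Trivalent : Prop :=
  ∀ v : Fin Γ.nv, 3 ≤ 2 * Γ.γ v + (Γ.flagsAt v).card

/-- The arithmetic genus `1 − |Ver| + |Edg| + Σ_v γ(v)` equals `g`. -/
def HasGenus (g : ℕ) : Prop :=
  1 - (Γ.nv : ℤ) + (Γ.Edg.card : ℤ) + ∑ v : Fin Γ.nv, (Γ.γ v : ℤ) = (g : ℤ)

/-- `m_v(Γ) = 3(γ(v)−1) + |F̄_v(Γ)|`, a natural number for trivalent graphs. -/
def mAt (v : Fin Γ.nv) : ℕ := 3 * Γ.γ v + (Γ.flagsAt v).card - 3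

end MarkedGraph

set_option linter.unusedSectionVars false
set_option maxHeartbeats 1000000

namespace Stmt10Aux

open scoped ENNReal
open Finset

variable {ι : Type*} [DecidableEq ι]

/-- Weight of a finsupp. -/
noncomputable def W (x : ι → ℝ≥0∞) (d : ι →₀ ℕ) : ℝ≥0∞ :=
  (Nat.multinomial d.support d : ℝ≥0∞) * ∏ r ∈ d.support, x r ^ d r

lemma multinomial_subset {s : Finset ι} {d : ι →₀ ℕ} (h : d.support ⊆ s) :
    Nat.multinomial s d = Nat.multinomial d.support d := by
  unfold Nat.multinomial
  rw [← Finset.sum_subset h (fun i _ hni => Finsupp.notMem_support_iff.mp hni),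
    ← Finset.prod_subset h (fun i _ hni => by
      rw [Finsupp.notMem_support_iff.mp hni]; rfl)]

lemma W_eq_on {s : Finset ι} (x : ι → ℝ≥0∞) {d : ι →₀ ℕ} (h : d.support ⊆ s) :
    W x d = (Nat.multinomial s d : ℝ≥0∞) * ∏ r ∈ s, x r ^ d r := by
  rw [W, multinomial_subset h, Finset.prod_subset h (fun i _ hni => by
    rw [Finsupp.notMem_support_iff.mp hni, pow_zero])]

lemma sum_finsuppAntidiag_W (x : ι → ℝ≥0∞) (s : Finset ι) (n : ℕ) :
    ∑ d ∈ Finset.finsuppAntidiag s n, W x d = (∑ i ∈ s, x i) ^ n := by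
  rw [Finset.sum_pow_eq_sum_piAntidiag]
  refine Finset.sum_bij' (fun d _ => (d : ι → ℕ))
    (fun k hk => Finsupp.onFinset s k (fun i h => (Finset.mem_piAntidiag.1 hk).2 i h))
    ?_ ?_ ?_ ?_ ?_
  · intro d hd
    obtain ⟨h1, h2⟩ := Finset.mem_finsuppAntidiag.1 hd
    exact Finset.mem_piAntidiag.2 ⟨h1, fun i hi => h2 (Finsupp.mem_support_iff.2 hi)⟩
  · intro k hk
    obtain ⟨h1, _⟩ := Finset.mem_piAntidiag.1 hk
    exact Finset.mem_finsuppAntidiag.2 ⟨h1, Finsupp.support_onFinset_subset⟩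
  · intro d hd
    ext a
    simp
  · intro k hk
    funext a
    simp
  · intro d hd
    obtain ⟨_, h2⟩ := Finset.mem_finsuppAntidiag.1 hd
    rw [W_eq_on x h2]

lemma tsum_subtype_eq_iSup (x : ι → ℝ≥0∞) (n : ℕ) :
    ∑' d : {d : ι →₀ ℕ // d.sum (fun _ k => k) = n}, W x d.1
      = ⨆ s : Finset ι, ∑ d ∈ Finset.finsuppAntidiag s n, W x d := by
  apply le_antisymm
  · rw [ENNReal.tsum_eq_iSup_sum]
    refine iSup_le fun t => le_iSup_of_le (t.sup fun d => d.1.support) ?_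
    rw [← Finset.sum_image (g := Subtype.val) (f := W x)
      (fun a _ b _ h => Subtype.ext h)]
    refine Finset.sum_le_sum_of_subset fun d hd => ?_
    obtain ⟨d', hd', rfl⟩ := Finset.mem_image.1 hd
    exact Finset.mem_finsuppAntidiag'.2 ⟨d'.2,
      Finset.le_sup (f := fun d : {d : ι →₀ ℕ // d.sum (fun _ k => k) = n} => d.1.support) hd'⟩
  · refine iSup_le fun s => ?_
    have hmem : ∀ d ∈ Finset.finsuppAntidiag s n, d.sum (fun _ k => k) = n :=
      fun d hd => (Finset.mem_finsuppAntidiag'.1 hd).1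
    calc ∑ d ∈ Finset.finsuppAntidiag s n, W x d
        = ∑ d ∈ (Finset.finsuppAntidiag s n).attach, W x d.1 :=
          (Finset.sum_attach _ _).symm
      _ = ∑ p ∈ (Finset.finsuppAntidiag s n).attach.map
            ⟨fun d => (⟨d.1, hmem d.1 d.2⟩ : {d : ι →₀ ℕ // d.sum (fun _ k => k) = n}),
              fun a b h => Subtype.ext (by have := congrArg Subtype.val h; exact this)⟩, W x p.1 := by
          rw [Finset.sum_map]; rfl
      _ ≤ _ := ENNReal.sum_le_tsum _

lemma tsum_W_eq_pow (x : ι → ℝ≥0∞) (n : ℕ) :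
    ∑' d : {d : ι →₀ ℕ // d.sum (fun _ k => k) = n}, W x d.1 = (∑' i, x i) ^ n := by
  rw [tsum_subtype_eq_iSup, ENNReal.tsum_eq_iSup_sum]
  simp only [sum_finsuppAntidiag_W]
  rcases eq_or_ne n 0 with rfl | hn
  · simp
  · exact (Monotone.map_iSup_of_continuousAt (f := fun z : ℝ≥0∞ => z ^ n)
      (ENNReal.continuous_pow n).continuousAt
      (fun a b hab => pow_le_pow_left₀ (zero_le) hab n)
      (by simpa using zero_pow (M₀ := ℝ≥0∞) hn)).symm

lemma tsum_vertex (x : ι → ℝ≥0∞) (m : ℕ) :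
    ∑' d : ι →₀ ℕ, ((m + d.sum fun _ k => k).choose (d.sum fun _ k => k) : ℝ≥0∞) * W x d
      = ∑' n : ℕ, ((m + n).choose n : ℝ≥0∞) * (∑' i, x i) ^ n := by
  rw [← Equiv.tsum_eq (Equiv.sigmaFiberEquiv (fun d : ι →₀ ℕ => d.sum fun _ k => k))
    (fun d => ((m + d.sum fun _ k => k).choose (d.sum fun _ k => k) : ℝ≥0∞) * W x d),
    ENNReal.tsum_sigma']
  refine tsum_congr fun n => ?_
  have : ∀ d : {d : ι →₀ ℕ // d.sum (fun _ k => k) = n},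
      ((m + (d.1.sum fun _ k => k)).choose (d.1.sum fun _ k => k) : ℝ≥0∞) * W x d.1
        = ((m + n).choose n : ℝ≥0∞) * W x d.1 := fun d => by rw [d.2]
  calc ∑' d : {d : ι →₀ ℕ // d.sum (fun _ k => k) = n},
        ((m + (d.1.sum fun _ k => k)).choose (d.1.sum fun _ k => k) : ℝ≥0∞) * W x d.1
      = ∑' d : {d : ι →₀ ℕ // d.sum (fun _ k => k) = n},
        ((m + n).choose n : ℝ≥0∞) * W x d.1 := tsum_congr this
    _ = ((m + n).choose n : ℝ≥0∞) * (∑' i, x i) ^ n := by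
        rw [ENNReal.tsum_mul_left, tsum_W_eq_pow]

lemma tsum_pi_prod {α : Type*} : ∀ (n : ℕ) (g : Fin n → α → ℝ≥0∞),
    ∑' c : Fin n → α, ∏ i, g i (c i) = ∏ i, ∑' a, g i a := by
  intro n
  induction n with
  | zero =>
    intro g
    simp only [Finset.univ_eq_empty, Finset.prod_empty]
    rw [tsum_eq_single (fun i => i.elim0)]
    · intro b hb; exact absurd (Subsingleton.elim _ _) hb
  | succ n ih =>
    intro g
    rw [← Equiv.tsum_eq (Fin.consEquiv fun _ : Fin (n+1) => α)
      (fun c => ∏ i, g i (c i))]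
    have : ∀ p : α × (Fin n → α),
        ∏ i, g i ((Fin.consEquiv fun _ : Fin (n+1) => α) (p.1, p.2) i)
          = g 0 p.1 * ∏ i : Fin n, g i.succ (p.2 i) := by
      intro p
      rw [Fin.prod_univ_succ]
      simp [Fin.consEquiv]
    calc (∑' p : α × (Fin n → α), ∏ i, g i ((Fin.consEquiv fun _ : Fin (n+1) => α) p i))
        = ∑' (a : α) (c : Fin n → α), g 0 a * ∏ i : Fin n, g i.succ (c i) := by
          rw [ENNReal.tsum_prod' (f := fun p : α × (Fin n → α) =>
            ∏ i, g i ((Fin.consEquiv fun _ : Fin (n+1) => α) p i))]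
          exact tsum_congr fun a => tsum_congr fun c => this (a, c)
      _ = (∑' a, g 0 a) * ∏ i : Fin n, ∑' a, g i.succ a := by
          simp_rw [ENNReal.tsum_mul_left, ih fun i => g i.succ]
          rw [ENNReal.tsum_mul_right]
      _ = ∏ i, ∑' a, g i a := by rw [Fin.prod_univ_succ]

/-! ### The specific series -/

noncomputable def s0 : ℝ := 2 * Real.log 2 - 1

lemma s0_nonneg : 0 ≤ s0 := by have := Real.log_two_gt_d9; unfold s0; nlinarith

lemma s0_lt_one : s0 < 1 := by have := Real.log_two_lt_d9; unfold s0; nlinarith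

lemma one_sub_s0 : 1 - s0 = 2 * (1 - Real.log 2) := by unfold s0; ring

lemma one_sub_s0_pos : 0 < 1 - s0 := by linarith [s0_lt_one]

noncomputable def xr (r : ℕ+) : ℝ := (2 : ℝ)⁻¹ ^ (r : ℕ) / ((r : ℕ) + 1)

lemma xr_nonneg (r : ℕ+) : 0 ≤ xr r := by unfold xr; positivity

lemma hasSum_xr : HasSum xr s0 := by
  have h : HasSum (fun n : ℕ => (2⁻¹ : ℝ) ^ (n + 1) / (n + 1)) (Real.log 2) := by
    have := Real.hasSum_pow_div_log_of_abs_lt_one (x := (2⁻¹ : ℝ))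
      (by rw [abs_of_pos] <;> norm_num)
    have h12 : (1 : ℝ) - 2⁻¹ = 2⁻¹ := by norm_num
    rw [h12, Real.log_inv] at this
    simpa using this
  set F : ℕ → ℝ := Function.update (fun n : ℕ => (2⁻¹ : ℝ) ^ (n + 1) / (n + 1)) 0 0 with hF
  have h2 : HasSum F (Real.log 2 - 2⁻¹) := by
    have := h.update 0 0
    have e : Real.log 2 - 2⁻¹ = 0 - (2⁻¹ : ℝ) ^ (0 + 1) / ((0 : ℕ) + 1) + Real.log 2 := by norm_num; ring
    rw [e]; exact this
  have hFval : ∀ r : ℕ+, F (r : ℕ) = (2⁻¹ : ℝ) ^ ((r : ℕ) + 1) / ((r : ℕ) + 1) := by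
    intro r
    rw [hF, Function.update_of_ne r.ne_zero]
  have h3 : HasSum (fun r : ℕ+ => F (r : ℕ)) (Real.log 2 - 2⁻¹) := by
    refine (hasSum_iff_hasSum_of_ne_zero_bij
      (f := F) (g := fun r : ℕ+ => F (r : ℕ))
      (fun x => ((x.1 : ℕ+) : ℕ)) ?_ ?_ (fun x => rfl)).1 h2
    · intro a b hab
      exact Subtype.ext (PNat.coe_injective hab)
    · intro n hn
      rcases Nat.eq_zero_or_pos n with rfl | hpos
      · exact absurd (by rw [hF]; simp) hn
      · refine ⟨⟨⟨n, hpos⟩, ?_⟩, rfl⟩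
        exact hn
  have h4 := h3.mul_left 2
  have heq : (fun r : ℕ+ => 2 * F (r : ℕ)) = xr := by
    funext r
    rw [hFval r]
    unfold xr
    rw [pow_succ]
    ring
  rw [heq] at h4
  have e : s0 = 2 * (Real.log 2 - 2⁻¹) := by unfold s0; ring
  rw [e]; exact h4

noncomputable def xE : ℕ+ → ℝ≥0∞ := fun r => ENNReal.ofReal (xr r)

lemma tsum_xE : ∑' r, xE r = ENNReal.ofReal s0 := by
  unfold xE
  rw [← ENNReal.ofReal_tsum_of_nonneg xr_nonneg hasSum_xr.summable, hasSum_xr.tsum_eq]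

lemma tsum_choose_pow (m : ℕ) :
    ∑' n : ℕ, ((m + n).choose n : ℝ≥0∞) * (ENNReal.ofReal s0) ^ n
      = ENNReal.ofReal ((1 - s0)⁻¹ ^ (m + 1)) := by
  have hs : ‖s0‖ < 1 := by
    rw [Real.norm_eq_abs, abs_of_nonneg s0_nonneg]; exact s0_lt_one
  have h := hasSum_choose_mul_geometric_of_norm_lt_one (𝕜 := ℝ) m hs
  have hterm : ∀ n : ℕ, ((m + n).choose n : ℝ≥0∞) * (ENNReal.ofReal s0) ^ n
      = ENNReal.ofReal (((n + m).choose m : ℝ) * s0 ^ n) := by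
    intro n
    rw [ENNReal.ofReal_mul (by positivity), ENNReal.ofReal_pow s0_nonneg,
      ENNReal.ofReal_natCast]
    congr 2
    rw [Nat.add_comm m n, Nat.choose_symm_add]
  calc ∑' n : ℕ, ((m + n).choose n : ℝ≥0∞) * (ENNReal.ofReal s0) ^ n
      = ∑' n : ℕ, ENNReal.ofReal (((n + m).choose m : ℝ) * s0 ^ n) := tsum_congr hterm
    _ = ENNReal.ofReal (∑' n : ℕ, ((n + m).choose m : ℝ) * s0 ^ n) :=
        (ENNReal.ofReal_tsum_of_nonneg
          (fun n => mul_nonneg (by positivity) (pow_nonneg s0_nonneg n)) h.summable).symm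
    _ = ENNReal.ofReal ((1 - s0)⁻¹ ^ (m + 1)) := by
        rw [h.tsum_eq, one_div, inv_pow]

/-- Full vertex weight. -/
noncomputable def G (m : ℕ) (d : ℕ+ →₀ ℕ) : ℝ≥0∞ :=
  ((m + d.sum fun _ k => k).choose (d.sum fun _ k => k) : ℝ≥0∞) * W xE d

lemma G_ne_top (m : ℕ) (d : ℕ+ →₀ ℕ) : G m d ≠ ∞ := by
  unfold G W
  refine ENNReal.mul_ne_top (ENNReal.natCast_ne_top _)
    (ENNReal.mul_ne_top (ENNReal.natCast_ne_top _) (ENNReal.prod_ne_top fun r _ => ?_))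
  exact ENNReal.pow_ne_top ENNReal.ofReal_ne_top

lemma tsum_G (m : ℕ) :
    ∑' d : ℕ+ →₀ ℕ, G m d = ENNReal.ofReal ((1 - s0)⁻¹ ^ (m + 1)) := by
  unfold G
  rw [tsum_vertex xE m, tsum_xE, tsum_choose_pow m]

lemma choose_mul_multinomial (m : ℕ) (d : ℕ+ →₀ ℕ) :
    (((m + ∑ r ∈ d.support, d r).choose (∑ r ∈ d.support, d r) : ℕ) : ℝ)
        * ((Nat.multinomial d.support d : ℕ) : ℝ)
      = ((m + ∑ r ∈ d.support, d r).factorial : ℝ)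
          / ((m.factorial : ℝ) * ∏ r ∈ d.support, ((d r).factorial : ℝ)) := by
  set σ := ∑ r ∈ d.support, d r with hσ
  have hspec : (∏ r ∈ d.support, (d r).factorial) * Nat.multinomial d.support d
      = σ.factorial := Nat.multinomial_spec _ _
  have key : (m + σ).choose σ * m.factorial * σ.factorial = (m + σ).factorial :=
    Nat.add_choose_mul_factorial_mul_factorial m σ
  have hden : (0 : ℝ) < (m.factorial : ℝ) * ∏ r ∈ d.support, ((d r).factorial : ℝ) := by
    apply mul_pos
    · exact_mod_cast Nat.factorial_pos m
    · exact Finset.prod_pos fun r _ => by exact_mod_cast Nat.factorial_pos (d r)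
  rw [eq_div_iff (ne_of_gt hden)]
  norm_cast
  calc (m + σ).choose σ * Nat.multinomial d.support d
        * (m.factorial * ∏ r ∈ d.support, (d r).factorial)
      = (m + σ).choose σ * m.factorial
        * ((∏ r ∈ d.support, (d r).factorial) * Nat.multinomial d.support d) := by ring
    _ = (m + σ).choose σ * m.factorial * σ.factorial := by rw [hspec]
    _ = (m + σ).factorial := key

lemma prod_xr_pow (d : ℕ+ →₀ ℕ) :
    ∏ r ∈ d.support, xr r ^ d r
      = ((2 : ℝ) ^ (∑ r ∈ d.support, (r : ℕ) * d r))⁻¹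
          * (∏ r ∈ d.support, (((r : ℕ) : ℝ) + 1) ^ d r)⁻¹ := by
  unfold xr
  simp only [div_pow, ← pow_mul]
  rw [Finset.prod_div_distrib, Finset.prod_pow_eq_pow_sum, inv_pow, div_eq_mul_inv]

lemma G_toReal (m : ℕ) (d : ℕ+ →₀ ℕ) :
    (G m d).toReal
      = ((2 : ℝ) ^ (∑ r ∈ d.support, (r : ℕ) * d r))⁻¹
          * (((m + ∑ r ∈ d.support, d r).factorial : ℝ)
              / ((m.factorial : ℝ) * ∏ r ∈ d.support, ((d r).factorial : ℝ))
            * (∏ r ∈ d.support, (((r : ℕ) : ℝ) + 1) ^ d r)⁻¹) := by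
  have hσ : (d.sum fun _ k => k) = ∑ r ∈ d.support, d r := rfl
  unfold G W xE
  rw [ENNReal.toReal_mul, ENNReal.toReal_mul, ENNReal.toReal_natCast,
    ENNReal.toReal_natCast, ENNReal.toReal_prod]
  simp only [ENNReal.toReal_pow, ENNReal.toReal_ofReal (xr_nonneg _)]
  rw [hσ, ← mul_assoc, choose_mul_multinomial m d, prod_xr_pow d]
  ring

end Stmt10Aux




namespace Stmt10Aux
open Finset

lemma sum_card_flagsAt {N : ℕ} (Γ : MarkedGraph N) :
    ∑ v : Fin Γ.nv, (Γ.flagsAt v).card = N + Γ.nf := by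
  have h := Finset.card_eq_sum_card_fiberwise
    (s := (Finset.univ : Finset (Fin N ⊕ Fin Γ.nf))) (t := Finset.univ) (f := Γ.η)
    (fun x _ => Finset.mem_univ _)
  simp only [Finset.card_univ, Fintype.card_sum, Fintype.card_fin] at h
  simp only [MarkedGraph.flagsAt]
  exact h.symm

lemma nf_eq_two_mul {N : ℕ} (Γ : MarkedGraph N) : Γ.nf = 2 * Γ.Edg.card := by
  have hdisj : ∀ x ∈ Γ.Edg, ∀ y ∈ Γ.Edg, x ≠ y → Disjoint x y := by
    intro x hx y hy hxy
    rw [Finset.disjoint_left]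
    intro f hfx hfy
    obtain ⟨e, -, hu⟩ := Γ.partition f
    exact hxy ((hu x ⟨hx, hfx⟩).trans (hu y ⟨hy, hfy⟩).symm)
  have hcover : (Finset.univ : Finset (Fin Γ.nf)) = Γ.Edg.biUnion id := by
    apply Finset.Subset.antisymm
    · intro f _
      obtain ⟨e, ⟨he, hfe⟩, -⟩ := Γ.partition f
      exact Finset.mem_biUnion.2 ⟨e, he, hfe⟩
    · exact fun f _ => Finset.mem_univ f
  calc Γ.nf = (Finset.univ : Finset (Fin Γ.nf)).card := by simp
    _ = ∑ e ∈ Γ.Edg, e.card := by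
        rw [hcover, Finset.card_biUnion (t := id) hdisj]
        rfl
    _ = ∑ e ∈ Γ.Edg, 2 := Finset.sum_congr rfl (fun e he => Γ.card_eq_two e he)
    _ = 2 * Γ.Edg.card := by rw [Finset.sum_const, smul_eq_mul, mul_comm]

lemma mAt_add_three {N : ℕ} (Γ : MarkedGraph N) (htri : Γ.Trivalent) (v : Fin Γ.nv) :
    Γ.mAt v + 3 = 3 * Γ.γ v + (Γ.flagsAt v).card := by
  have h := htri v
  unfold MarkedGraph.mAt
  omega

lemma exponent_eq {g N : ℕ} (Γ : MarkedGraph N) (htri : Γ.Trivalent) (hgen : Γ.HasGenus g) :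
    ((∑ v : Fin Γ.nv, (Γ.mAt v + 1) : ℕ) : ℤ)
      = 3 * (g : ℤ) + (N : ℤ) - 2 - (1 - (Γ.nv : ℤ) + (Γ.Edg.card : ℤ)) := by
  have h1 : ∀ v : Fin Γ.nv, ((Γ.mAt v : ℤ) + 1)
      = 3 * (Γ.γ v : ℤ) + ((Γ.flagsAt v).card : ℤ) - 2 := by
    intro v
    have := mAt_add_three Γ htri v
    have := congrArg (fun n : ℕ => (n : ℤ)) this
    push_cast at this
    linarith
  have h2 : (∑ v : Fin Γ.nv, ((Γ.flagsAt v).card : ℤ)) = (N : ℤ) + 2 * (Γ.Edg.card : ℤ) := by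
    have := congrArg (fun n : ℕ => (n : ℤ)) (sum_card_flagsAt Γ)
    push_cast at this
    rw [this]
    have h4 := nf_eq_two_mul Γ
    omega
  have hgen' := hgen
  unfold MarkedGraph.HasGenus at hgen'
  have h3 : ((∑ v : Fin Γ.nv, (Γ.mAt v + 1) : ℕ) : ℤ)
      = ∑ v : Fin Γ.nv, (3 * (Γ.γ v : ℤ) + ((Γ.flagsAt v).card : ℤ) - 2) := by
    push_cast
    exact Finset.sum_congr rfl fun v _ => h1 v
  rw [h3, Finset.sum_sub_distrib, Finset.sum_add_distrib, ← Finset.mul_sum, h2,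
    Finset.sum_const, Finset.card_univ]
  simp only [Fintype.card_fin, nsmul_eq_mul]
  linarith

end Stmt10Aux

open scoped ENNReal
open Stmt10Aux

/-- Let `Γ` be a connected trivalent `N`-marked graph of genus `g` (`2g+N ≥ 3`).
The family
`2^{−‖c‖}·∏_{v∈Ver} [((m_v(Γ)+|c_v|)!/(m_v(Γ)!·∏_{r≥1} c_{v,r}!))·∏_{r≥1}(r+1)^{−c_{v,r}}]`,
indexed by all families `c = (c_v)_{v∈Ver}` of finitely supported functions
`c_v : {1,2,3,…} → ℕ`, is summable with sum `(2(1−ln 2))^{−(3g+N−2−g_Γ)}`,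
where `g_Γ = 1 − |Ver| + |Edg|` and `‖c‖ = Σ_v Σ_r r·c_{v,r}`. -/
theorem stmt_10 (g N : ℕ) (hgN : 3 ≤ 2 * g + N) (Γ : MarkedGraph N)
    (hconn : Γ.Connected) (htri : Γ.Trivalent) (hgen : Γ.HasGenus g) :
    HasSum
      (fun c : Fin Γ.nv → (ℕ+ →₀ ℕ) =>
        ((2 : ℝ) ^ (∑ v : Fin Γ.nv, ∑ r ∈ (c v).support, (r : ℕ) * c v r))⁻¹ *
          ∏ v : Fin Γ.nv,
            (((Γ.mAt v + ∑ r ∈ (c v).support, c v r).factorial : ℝ) /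
                ((Γ.mAt v).factorial *
                  ∏ r ∈ (c v).support, ((c v r).factorial : ℝ)) *
              (∏ r ∈ (c v).support, (((r : ℕ) : ℝ) + 1) ^ (c v r))⁻¹))
      ((2 * (1 - Real.log 2)) ^
        (-(3 * (g : ℤ) + (N : ℤ) - 2 - (1 - (Γ.nv : ℤ) + (Γ.Edg.card : ℤ))))) := by
  classical
  set L : ℝ := ∏ v : Fin Γ.nv, (1 - s0)⁻¹ ^ (Γ.mAt v + 1) with hL
  have hLnn : 0 ≤ L :=
    Finset.prod_nonneg fun v _ => pow_nonneg (inv_nonneg.2 (le_of_lt one_sub_s0_pos)) _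
  have key := tsum_pi_prod Γ.nv (fun v => G (Γ.mAt v))
  have hprod : (∏ v : Fin Γ.nv, ∑' d : ℕ+ →₀ ℕ, G (Γ.mAt v) d) = ENNReal.ofReal L := by
    rw [hL, ENNReal.ofReal_prod_of_nonneg
      (fun v _ => pow_nonneg (inv_nonneg.2 (le_of_lt one_sub_s0_pos)) _)]
    exact Finset.prod_congr rfl fun v _ => by
      rw [tsum_G (Γ.mAt v)]
  have htsum : ∑' c : Fin Γ.nv → (ℕ+ →₀ ℕ), ∏ v, G (Γ.mAt v) (c v) = ENNReal.ofReal L := by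
    rw [key, hprod]
  have hFne : ∀ c : Fin Γ.nv → (ℕ+ →₀ ℕ), (∏ v, G (Γ.mAt v) (c v)) ≠ ∞ :=
    fun c => ENNReal.prod_ne_top fun v _ => G_ne_top _ _
  have hne : (∑' c : Fin Γ.nv → (ℕ+ →₀ ℕ), ∏ v, G (Γ.mAt v) (c v)) ≠ ∞ := by
    rw [htsum]; exact ENNReal.ofReal_ne_top
  have hts := ENNReal.hasSum_toReal hne
  have hsumval : (∑' c : Fin Γ.nv → (ℕ+ →₀ ℕ), (∏ v, G (Γ.mAt v) (c v)).toReal) = L := by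
    rw [← ENNReal.tsum_toReal_eq hFne, htsum, ENNReal.toReal_ofReal hLnn]
  rw [hsumval] at hts
  have hfun : (fun c : Fin Γ.nv → (ℕ+ →₀ ℕ) =>
        ((2 : ℝ) ^ (∑ v : Fin Γ.nv, ∑ r ∈ (c v).support, (r : ℕ) * c v r))⁻¹ *
          ∏ v : Fin Γ.nv,
            (((Γ.mAt v + ∑ r ∈ (c v).support, c v r).factorial : ℝ) /
                ((Γ.mAt v).factorial *
                  ∏ r ∈ (c v).support, ((c v r).factorial : ℝ)) *
              (∏ r ∈ (c v).support, (((r : ℕ) : ℝ) + 1) ^ (c v r))⁻¹))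
      = fun c => (∏ v, G (Γ.mAt v) (c v)).toReal := by
    funext c
    rw [ENNReal.toReal_prod]
    simp only [G_toReal]
    simp only [Finset.prod_mul_distrib, Finset.prod_inv_distrib,
      Finset.prod_pow_eq_pow_sum]
  have hval : ((2 * (1 - Real.log 2)) ^
        (-(3 * (g : ℤ) + (N : ℤ) - 2 - (1 - (Γ.nv : ℤ) + (Γ.Edg.card : ℤ))))) = L := by
    have hexp := exponent_eq Γ htri hgen
    rw [← hexp, zpow_neg, zpow_natCast, ← one_sub_s0]
    rw [hL, Finset.prod_pow_eq_pow_sum, inv_pow]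
  rw [← hfun, ← hval] at hts
  exact hts
end

section
/- Let g, N ∈ ℕ with 2g + N ≥ 3 and let Γ be a connected trivalent N-marked graph of genus g. Then |Ver| ≤ 2(g−1) + N, |Edg| ≤ 3(g−1) + N, and Σ_{v∈Ver} ((γ(v)−1) + |F̄_v(Γ)|) ≤ 4(g−1) + 2N. -/
/-- For a connected trivalent `N`-marked graph `Γ` of genus `g` (with `2g+N ≥ 3`):
`|Ver| ≤ 2(g−1)+N`, `|Edg| ≤ 3(g−1)+N`, and
`Σ_{v∈Ver} ((γ(v)−1) + |F̄_v(Γ)|) ≤ 4(g−1)+2N`. -/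
theorem stmt_12 (g N : ℕ) (hgN : 3 ≤ 2 * g + N) (Γ : MarkedGraph N)
    (hconn : Γ.Connected) (htri : Γ.Trivalent) (hgen : Γ.HasGenus g) :
    (Γ.nv : ℤ) ≤ 2 * ((g : ℤ) - 1) + N ∧
    (Γ.Edg.card : ℤ) ≤ 3 * ((g : ℤ) - 1) + N ∧
    (∑ v : Fin Γ.nv, (((Γ.γ v : ℤ) - 1) + ((Γ.flagsAt v).card : ℤ))) ≤
      4 * ((g : ℤ) - 1) + 2 * N := by
  -- flags count
  have hflags : ∑ v : Fin Γ.nv, (Γ.flagsAt v).card = N + Γ.nf := by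
    have h := Finset.card_eq_sum_card_fiberwise
      (f := Γ.η) (s := (Finset.univ : Finset (Fin N ⊕ Fin Γ.nf))) (t := Finset.univ)
      (fun x _ => Finset.mem_univ _)
    simp only [Finset.card_univ, Fintype.card_sum, Fintype.card_fin] at h
    simp only [MarkedGraph.flagsAt]
    exact h.symm
  -- nf = 2 * #edges
  have hcover : Γ.Edg.biUnion id = Finset.univ := by
    ext f
    simp only [Finset.mem_biUnion, Finset.mem_univ, iff_true, id]
    obtain ⟨e, ⟨he, hf⟩, -⟩ := Γ.partition f
    exact ⟨e, he, hf⟩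
  have hnf : Γ.nf = 2 * Γ.Edg.card := by
    have h1 : (Γ.Edg.biUnion id).card = ∑ e ∈ Γ.Edg, (id e).card := by
      apply Finset.card_biUnion
      intro e he e' he' hne
      rw [Function.onFun, Finset.disjoint_left]
      intro f hf hf'
      obtain ⟨u, -, huniq⟩ := Γ.partition f
      exact hne ((huniq e ⟨he, hf⟩).trans (huniq e' ⟨he', hf'⟩).symm)
    rw [hcover, Finset.card_univ, Fintype.card_fin] at h1
    refine h1.trans ?_
    calc ∑ e ∈ Γ.Edg, (id e).card = ∑ _e ∈ Γ.Edg, 2 :=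
          Finset.sum_congr rfl (fun e he => Γ.card_eq_two e he)
      _ = 2 * Γ.Edg.card := by rw [Finset.sum_const, smul_eq_mul, mul_comm]
  -- cast versions
  have hflagsZ : ∑ v : Fin Γ.nv, ((Γ.flagsAt v).card : ℤ)
      = (N : ℤ) + 2 * (Γ.Edg.card : ℤ) := by
    have hn : ∑ v : Fin Γ.nv, (Γ.flagsAt v).card = N + 2 * Γ.Edg.card := by omega
    exact_mod_cast hn
  have key : 3 * (Γ.nv : ℤ) ≤ 2 * (∑ v : Fin Γ.nv, (Γ.γ v : ℤ))
      + ∑ v : Fin Γ.nv, ((Γ.flagsAt v).card : ℤ) := by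
    calc 3 * (Γ.nv : ℤ) = ∑ _v : Fin Γ.nv, (3 : ℤ) := by
          simp [Finset.sum_const, Finset.card_univ, mul_comm]
      _ ≤ ∑ v : Fin Γ.nv, (2 * (Γ.γ v : ℤ) + ((Γ.flagsAt v).card : ℤ)) := by
          apply Finset.sum_le_sum
          intro v _
          exact_mod_cast htri v
      _ = _ := by rw [Finset.sum_add_distrib, ← Finset.mul_sum]
  have hSnn : 0 ≤ ∑ v : Fin Γ.nv, (Γ.γ v : ℤ) :=
    Finset.sum_nonneg fun v _ => Int.ofNat_nonneg _
  have hgen' := hgen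
  unfold MarkedGraph.HasGenus at hgen'
  have h1 : (Γ.nv : ℤ) ≤ 2 * ((g : ℤ) - 1) + N := by linarith [key, hflagsZ, hgen']
  have h2 : (Γ.Edg.card : ℤ) ≤ 3 * ((g : ℤ) - 1) + N := by linarith
  refine ⟨h1, h2, ?_⟩
  have hsum : (∑ v : Fin Γ.nv, (((Γ.γ v : ℤ) - 1) + ((Γ.flagsAt v).card : ℤ)))
      = (∑ v : Fin Γ.nv, (Γ.γ v : ℤ)) - (Γ.nv : ℤ)
        + ((N : ℤ) + 2 * (Γ.Edg.card : ℤ)) := by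
    rw [Finset.sum_add_distrib, Finset.sum_sub_distrib, Finset.sum_const,
      Finset.card_univ, Fintype.card_fin, hflagsZ]
    simp [nsmul_eq_mul]
  rw [hsum]
  linarith
end

section
/- For every m ∈ ℕ, the family of nonnegative reals 2^{−Σ_{r≥1} r·c_r} · ((m+|c|)! / (m! · ∏_{r≥1} c_r!)) · ∏_{r≥1} (r+1)^{−c_r}, indexed by all finitely supported functions c: {1,2,3,…} → ℕ (with |c| = Σ_{r≥1} c_r), is summable with sum (2(1−ln 2))^{−(m+1)}. -/
open Finset ENNReal Filter Topology

/-- Multinomial coefficient doesn't change when enlarging the index set by zeros. -/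
lemma my_multinomial_subset {ι : Type*} {t s : Finset ι} (f : ι → ℕ)
    (hts : t ⊆ s) (h : ∀ i ∈ s, i ∉ t → f i = 0) :
    Nat.multinomial s f = Nat.multinomial t f := by
  have hprod : ∏ i ∈ s, (f i).factorial = ∏ i ∈ t, (f i).factorial := by
    refine (Finset.prod_subset hts ?_).symm
    intro i his hit
    simp [h i his hit]
  have hsum : ∑ i ∈ s, f i = ∑ i ∈ t, f i :=
    (Finset.sum_subset hts fun i his hit => h i his hit).symm
  have h1 := Nat.multinomial_spec s f
  have h2 := Nat.multinomial_spec t f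
  rw [hprod, hsum] at h1
  have hpos : 0 < ∏ i ∈ t, (f i).factorial :=
    Finset.prod_pos fun i _ => Nat.factorial_pos _
  exact Nat.eq_of_mul_eq_mul_left hpos (h1.trans h2.symm)

/-- Multinomial theorem for `finsuppAntidiag`, in `ℝ≥0∞`. -/
lemma my_sum_pow_finsupp (s : Finset ℕ+) (x : ℕ+ → ℝ≥0∞) (n : ℕ) :
    ∑ c ∈ Finset.finsuppAntidiag s n,
        (Nat.multinomial c.support c : ℝ≥0∞) * ∏ r ∈ c.support, x r ^ c r
      = (∑ r ∈ s, x r) ^ n := by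
  classical
  rw [Finset.sum_pow_eq_sum_piAntidiag s x n]
  refine Finset.sum_bij (fun c _ => ⇑c) ?_ ?_ ?_ ?_
  · intro c hc
    rw [Finset.mem_finsuppAntidiag] at hc
    rw [Finset.mem_piAntidiag]
    exact ⟨hc.1, fun i h => hc.2 (Finsupp.mem_support_iff.2 h)⟩
  · intro a _ b _ h
    exact DFunLike.coe_injective h
  · intro k hk
    rw [Finset.mem_piAntidiag] at hk
    refine ⟨Finsupp.onFinset s k hk.2, ?_, rfl⟩
    rw [Finset.mem_finsuppAntidiag]
    refine ⟨?_, Finsupp.support_onFinset_subset⟩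
    simpa using hk.1
  · intro c hc
    rw [Finset.mem_finsuppAntidiag] at hc
    rw [my_multinomial_subset (⇑c) hc.2
      (fun i _ hi => Finsupp.notMem_support_iff.1 hi)]
    congr 1
    refine Finset.prod_subset hc.2 ?_
    intro i _ hi
    rw [Finsupp.notMem_support_iff.1 hi, pow_zero]

/-- Core identity: tsum over finsupps with total sum `n` equals `(∑' x)^n`. -/
lemma my_core (x : ℕ+ → ℝ≥0∞) (n : ℕ) :
    ∑' p : {c : ℕ+ →₀ ℕ // ∑ r ∈ c.support, c r = n},
        ((Nat.multinomial p.1.support p.1 : ℝ≥0∞) * ∏ r ∈ p.1.support, x r ^ p.1 r)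
      = (∑' r, x r) ^ n := by
  classical
  have hmem : ∀ (s : Finset ℕ+), ∀ c ∈ Finset.finsuppAntidiag s n,
      (∑ r ∈ c.support, c r) = n := by
    intro s c hc
    rw [Finset.mem_finsuppAntidiag] at hc
    exact (Finset.sum_subset hc.2 fun i _ hi => Finsupp.notMem_support_iff.1 hi).trans hc.1
  have hdir : ∀ t : Finset {c : ℕ+ →₀ ℕ // (∑ r ∈ c.support, c r) = n},
      ∃ s : Finset ℕ+,
        t ⊆ (Finset.finsuppAntidiag s n).subtype (fun c => (∑ r ∈ c.support, c r) = n) := by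
    intro t
    refine ⟨t.sup (fun p => p.1.support), fun p hp => ?_⟩
    rw [Finset.mem_subtype, Finset.mem_finsuppAntidiag]
    have hsub : p.1.support ⊆
        t.sup (fun p : {c : ℕ+ →₀ ℕ // (∑ r ∈ c.support, c r) = n} => p.1.support) :=
      Finset.le_sup (f := fun p : {c : ℕ+ →₀ ℕ // (∑ r ∈ c.support, c r) = n} =>
        p.1.support) hp
    refine ⟨?_, hsub⟩
    rw [← Finset.sum_subset hsub (fun i _ hi => Finsupp.notMem_support_iff.1 hi)]
    exact p.2
  rw [ENNReal.tsum_eq_iSup_sum' _ hdir]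
  have hsumΦ : ∀ s : Finset ℕ+,
      (∑ p ∈ (Finset.finsuppAntidiag s n).subtype (fun c => (∑ r ∈ c.support, c r) = n),
        ((Nat.multinomial p.1.support p.1 : ℝ≥0∞) * ∏ r ∈ p.1.support, x r ^ p.1 r))
        = (∑ r ∈ s, x r) ^ n := by
    intro s
    rw [Finset.sum_subtype_of_mem
      (fun c : ℕ+ →₀ ℕ => (Nat.multinomial c.support c : ℝ≥0∞) * ∏ r ∈ c.support, x r ^ c r)
      (hmem s)]
    exact my_sum_pow_finsupp s x n
  rw [iSup_congr hsumΦ]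
  have h1 : Tendsto (fun s : Finset ℕ+ => (∑ r ∈ s, x r) ^ n) atTop
      (𝓝 ((∑' r, x r) ^ n)) :=
    ((ENNReal.continuous_pow n).tendsto _).comp ENNReal.summable.hasSum
  have h2 : Monotone (fun s : Finset ℕ+ => (∑ r ∈ s, x r) ^ n) := fun s t hst =>
    pow_le_pow_left₀ zero_le (Finset.sum_le_sum_of_subset hst) n
  exact tendsto_nhds_unique (tendsto_atTop_iSup h2) h1

lemma my_ofReal_prod_pow {y : ℕ+ → ℝ} (hy : ∀ r, 0 ≤ y r) (t : Finset ℕ+) (k : ℕ+ → ℕ) :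
    ENNReal.ofReal (∏ r ∈ t, y r ^ k r) = ∏ r ∈ t, ENNReal.ofReal (y r) ^ k r := by
  classical
  induction t using Finset.cons_induction with
  | empty => simp
  | cons a t ha ih =>
    rw [Finset.prod_cons, Finset.prod_cons, ENNReal.ofReal_mul (pow_nonneg (hy a) _),
      ENNReal.ofReal_pow (hy a), ih]

/-- For every `m ∈ ℕ`, the family
`2^{−Σ_{r≥1} r·c_r}·((m+|c|)!/(m!·∏_{r≥1} c_r!))·∏_{r≥1}(r+1)^{−c_r}`,
indexed by all finitely supported `c : {1,2,3,…} → ℕ` (with `|c| = Σ_r c_r`),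
is summable with sum `(2(1−ln 2))^{−(m+1)}`. -/
theorem stmt_13 (m : ℕ) :
    HasSum
      (fun c : ℕ+ →₀ ℕ =>
        ((2 : ℝ) ^ (∑ r ∈ c.support, (r : ℕ) * c r))⁻¹ *
          (((m + ∑ r ∈ c.support, c r).factorial : ℝ) /
            ((m.factorial : ℝ) * ∏ r ∈ c.support, ((c r).factorial : ℝ))) *
          (∏ r ∈ c.support, (((r : ℕ) : ℝ) + 1) ^ (c r))⁻¹)
      ((2 * (1 - Real.log 2)) ^ (m + 1))⁻¹ := by
  classical
  set f : (ℕ+ →₀ ℕ) → ℝ := fun c =>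
    ((2 : ℝ) ^ (∑ r ∈ c.support, (r : ℕ) * c r))⁻¹ *
      (((m + ∑ r ∈ c.support, c r).factorial : ℝ) /
        ((m.factorial : ℝ) * ∏ r ∈ c.support, ((c r).factorial : ℝ))) *
      (∏ r ∈ c.support, (((r : ℕ) : ℝ) + 1) ^ (c r))⁻¹ with hf
  set R : ℝ := ((2 * (1 - Real.log 2)) ^ (m + 1))⁻¹ with hR
  -- basic numeric facts
  have hlog1 : Real.log 2 < 0.6931471808 := Real.log_two_lt_d9
  have hlog2 : (0.6931471803 : ℝ) < Real.log 2 := Real.log_two_gt_d9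
  set s₀ : ℝ := 2 * Real.log 2 - 1 with hs₀
  have hs₀0 : 0 ≤ s₀ := by rw [hs₀]; linarith
  have hs₀1 : s₀ < 1 := by rw [hs₀]; linarith
  have hR0 : 0 ≤ R := by
    have h2l : (0:ℝ) < 2 * (1 - Real.log 2) := by linarith
    rw [hR]
    positivity
  -- the weights
  set y : ℕ+ → ℝ := fun r => ((2 : ℝ)⁻¹) ^ (r : ℕ) * (((r : ℕ) : ℝ) + 1)⁻¹ with hy
  have hynn : ∀ r, 0 ≤ y r := fun r => by rw [hy]; positivity
  -- `HasSum y s₀`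
  have hylog : HasSum y s₀ := by
    have h0 : HasSum (fun n : ℕ => ((2 : ℝ)⁻¹) ^ (n + 1) / ((n : ℝ) + 1)) (Real.log 2) := by
      have h := Real.hasSum_pow_div_log_of_abs_lt_one
        (x := (2 : ℝ)⁻¹) (by rw [abs_of_nonneg] <;> norm_num)
      convert h using 1
      rw [show (1 : ℝ) - 2⁻¹ = 2⁻¹ by norm_num, Real.log_inv, neg_neg]
    have h0' : HasSum (fun n : ℕ => ((2 : ℝ)⁻¹) ^ (n + 1) / ((n : ℝ) + 1))
        ((Real.log 2 - 2⁻¹) + ∑ i ∈ Finset.range 1, ((2 : ℝ)⁻¹) ^ (i + 1) / ((i : ℝ) + 1)) := by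
      convert h0 using 1
      norm_num
    have h1 := (hasSum_nat_add_iff
      (f := fun n : ℕ => ((2 : ℝ)⁻¹) ^ (n + 1) / ((n : ℝ) + 1)) 1).2 h0'
    have h2 := h1.mul_left 2
    have he : HasSum (fun n : ℕ => y (Equiv.pnatEquivNat.symm n)) s₀ := by
      convert h2 using 2 with n
      · rfl
      · rw [hy]
        simp only [Equiv.pnatEquivNat, Equiv.coe_fn_symm_mk, Nat.succPNat_coe]
        rw [div_eq_mul_inv, pow_succ]
        push_cast
        ring
      · rw [hs₀]; ring
    exact (Equiv.hasSum_iff Equiv.pnatEquivNat.symm).1 he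
  -- ENNReal versions
  set X : ℕ+ → ℝ≥0∞ := fun r => ENNReal.ofReal (y r) with hX
  have hS : (∑' r, X r) = ENNReal.ofReal s₀ := by
    rw [hX, ← ENNReal.ofReal_tsum_of_nonneg hynn hylog.summable, hylog.tsum_eq]
  set φ : (ℕ+ →₀ ℕ) → ℕ := fun c => ∑ r ∈ c.support, c r with hφ
  set N : (ℕ+ →₀ ℕ) → ℕ := fun c => (m + φ c).choose (φ c) * Nat.multinomial c.support c
    with hN
  -- the factorial quotient is the natural number `N c`
  have hNc : ∀ c : ℕ+ →₀ ℕ,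
      ((m + φ c).factorial : ℝ) /
        ((m.factorial : ℝ) * ∏ r ∈ c.support, ((c r).factorial : ℝ)) = (N c : ℝ) := by
    intro c
    have hspec := Nat.multinomial_spec c.support c
    have hkey : N c * (m.factorial * ∏ r ∈ c.support, (c r).factorial)
        = (m + φ c).factorial := by
      calc N c * (m.factorial * ∏ r ∈ c.support, (c r).factorial)
          = (m + φ c).choose (φ c) * m.factorial *
              ((∏ r ∈ c.support, (c r).factorial) * Nat.multinomial c.support c) := by
            rw [hN]; ring
        _ = (m + φ c).choose (φ c) * m.factorial * (φ c).factorial := by rw [hspec]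
        _ = (m + φ c).factorial := Nat.add_choose_mul_factorial_mul_factorial m (φ c)
    have hden : (0 : ℝ) < (m.factorial : ℝ) * ∏ r ∈ c.support, ((c r).factorial : ℝ) := by
      refine mul_pos (by exact_mod_cast m.factorial_pos) ?_
      exact Finset.prod_pos fun r _ => by exact_mod_cast (c r).factorial_pos
    rw [div_eq_iff hden.ne']
    rw [← hkey]
    push_cast
    ring
  -- pointwise identity in ℝ≥0∞
  have hpt : ∀ c : ℕ+ →₀ ℕ, ENNReal.ofReal (f c) =
      ((m + φ c).choose (φ c) : ℝ≥0∞) *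
        ((Nat.multinomial c.support c : ℝ≥0∞) * ∏ r ∈ c.support, X r ^ c r) := by
    intro c
    have hprod : ∏ r ∈ c.support, y r ^ c r =
        ((2 : ℝ) ^ (∑ r ∈ c.support, (r : ℕ) * c r))⁻¹ *
          (∏ r ∈ c.support, (((r : ℕ) : ℝ) + 1) ^ (c r))⁻¹ := by
      rw [hy]
      simp only [mul_pow, ← pow_mul]
      rw [Finset.prod_mul_distrib, Finset.prod_pow_eq_pow_sum, inv_pow,
        ← Finset.prod_inv_distrib]
      congr 1
      exact Finset.prod_congr rfl fun r _ => by rw [inv_pow]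
    have hfc : f c = (N c : ℝ) * ∏ r ∈ c.support, y r ^ c r := by
      rw [hf, hprod, ← hNc c]
      ring
    rw [hfc, ENNReal.ofReal_mul (by positivity), ENNReal.ofReal_natCast,
      my_ofReal_prod_pow hynn, hN]
    push_cast
    rw [mul_assoc]
  -- main computation in ℝ≥0∞
  have hE : (∑' c : ℕ+ →₀ ℕ, ENNReal.ofReal (f c)) = ENNReal.ofReal R := by
    calc (∑' c : ℕ+ →₀ ℕ, ENNReal.ofReal (f c))
        = ∑' c : ℕ+ →₀ ℕ, ((m + φ c).choose (φ c) : ℝ≥0∞) *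
            ((Nat.multinomial c.support c : ℝ≥0∞) * ∏ r ∈ c.support, X r ^ c r) :=
          tsum_congr hpt
      _ = ∑' p : (Σ n : ℕ, {c : ℕ+ →₀ ℕ // φ c = n}),
            ((m + φ p.2.1).choose (φ p.2.1) : ℝ≥0∞) *
              ((Nat.multinomial p.2.1.support p.2.1 : ℝ≥0∞) *
                ∏ r ∈ p.2.1.support, X r ^ p.2.1 r) :=
          ((Equiv.sigmaFiberEquiv φ).tsum_eq _).symm
      _ = ∑' (n : ℕ) (p : {c : ℕ+ →₀ ℕ // φ c = n}),
            ((m + φ p.1).choose (φ p.1) : ℝ≥0∞) *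
              ((Nat.multinomial p.1.support p.1 : ℝ≥0∞) *
                ∏ r ∈ p.1.support, X r ^ p.1 r) := ENNReal.tsum_sigma' _
      _ = ∑' (n : ℕ), ((m + n).choose n : ℝ≥0∞) *
            ∑' p : {c : ℕ+ →₀ ℕ // φ c = n},
              ((Nat.multinomial p.1.support p.1 : ℝ≥0∞) *
                ∏ r ∈ p.1.support, X r ^ p.1 r) := by
          refine tsum_congr fun n => ?_
          rw [← ENNReal.tsum_mul_left]
          refine tsum_congr fun p => ?_
          rw [p.2]
      _ = ∑' (n : ℕ), ((m + n).choose n : ℝ≥0∞) * (ENNReal.ofReal s₀) ^ n := by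
          refine tsum_congr fun n => ?_
          rw [my_core X n, hS]
      _ = ENNReal.ofReal R := by
          have hnorm : ‖s₀‖ < 1 := by
            rw [Real.norm_eq_abs, abs_of_nonneg hs₀0]
            exact hs₀1
          have hgeo := hasSum_choose_mul_geometric_of_norm_lt_one (𝕜 := ℝ) m hnorm
          have h₁ := ENNReal.ofReal_tsum_of_nonneg
            (f := fun n : ℕ => (((n + m).choose m : ℝ)) * s₀ ^ n)
            (fun n => by positivity) hgeo.summable
          rw [hgeo.tsum_eq] at h₁
          beta_reduce at h₁
          have h₂ : (1 : ℝ) / (1 - s₀) ^ (m + 1) = R := by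
            rw [hR, show (1 : ℝ) - s₀ = 2 * (1 - Real.log 2) by rw [hs₀]; ring, one_div]
          rw [h₂] at h₁
          rw [h₁]
          refine tsum_congr fun n => ?_
          rw [ENNReal.ofReal_mul (by positivity), ENNReal.ofReal_natCast,
            ENNReal.ofReal_pow hs₀0]
          congr 2
          rw [add_comm m n, Nat.choose_symm_add]
  -- convert back to a real `HasSum`
  have hfnn : ∀ c, 0 ≤ f c := by
    intro c
    rw [hf]
    have h1 : (0:ℝ) ≤ ((m + ∑ r ∈ c.support, c r).factorial : ℝ) /
        ((m.factorial : ℝ) * ∏ r ∈ c.support, ((c r).factorial : ℝ)) := by positivity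
    positivity
  have hEsum : HasSum (fun c => ENNReal.ofReal (f c)) (ENNReal.ofReal R) := by
    rw [← hE]
    exact ENNReal.summable.hasSum
  have hcoe : HasSum (fun c => (f c).toNNReal) R.toNNReal := by
    apply ENNReal.hasSum_coe.1
    exact hEsum
  have := NNReal.hasSum_coe.2 hcoe
  rw [Real.coe_toNNReal _ hR0] at this
  convert this using 2 with c
  rw [Real.coe_toNNReal _ (hfnn c)]
end

section
/- For every finitely supported c: {1,2,3,…} → ℕ and all B, M ∈ ℕ: Σ_{b′ ∈ ℕ^{S(c)}} (−1)^{|b′|} · C(B+|b′|, M+|c|) · ∏_{(r,j)∈S(c)} C(r, b′_{r,j}) = (−1)^{‖c‖} · C(B, M+|c|−‖c‖). (The sum is finite since C(r, b′_{r,j}) = 0 for b′_{r,j} > r; the binomial coefficient C(B, M+|c|−‖c‖) is 0 if M+|c|−‖c‖ < 0. In the paper this is used with M = m−3 for m ≥ 3 and with M = m−1 for m ≥ 1.) -/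
open Finset

private def Sv (r B N : ℕ) : ℤ :=
  ∑ b ∈ Finset.range (r + 1), (-1 : ℤ) ^ b * (r.choose b : ℤ) * ((B + b).choose N : ℤ)

private lemma Sv_succ (r B N : ℕ) : Sv (r + 1) B N = Sv r B N - Sv r (B + 1) N := by
  have hW : ∑ b ∈ Finset.range (r + 1),
      (-1 : ℤ) ^ b * (r.choose (b + 1) : ℤ) * ((B + (b + 1)).choose N : ℤ)
      = (B.choose N : ℤ) - Sv r B N := by
    have h1 : Sv r B N =
        (∑ b ∈ Finset.range r,
          (-1 : ℤ) ^ (b + 1) * (r.choose (b + 1) : ℤ) * ((B + (b + 1)).choose N : ℤ))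
        + (-1 : ℤ) ^ 0 * (r.choose 0 : ℤ) * ((B + 0).choose N : ℤ) := by
      exact Finset.sum_range_succ' _ r
    rw [Finset.sum_range_succ]
    simp only [Nat.choose_succ_self, Nat.cast_zero, mul_zero, zero_mul, add_zero]
    have h2 : ∑ b ∈ Finset.range r,
        (-1 : ℤ) ^ b * (r.choose (b + 1) : ℤ) * ((B + (b + 1)).choose N : ℤ)
        = -∑ b ∈ Finset.range r,
          (-1 : ℤ) ^ (b + 1) * (r.choose (b + 1) : ℤ) * ((B + (b + 1)).choose N : ℤ) := by
      rw [← Finset.sum_neg_distrib]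
      exact Finset.sum_congr rfl fun b _ => by ring
    rw [h2, h1]
    simp
  have : Sv (r + 1) B N =
      (∑ b ∈ Finset.range (r + 1),
        ((-1 : ℤ) ^ (b + 1) * ((r + 1).choose (b + 1) : ℤ) * ((B + (b + 1)).choose N : ℤ)))
      + (-1 : ℤ) ^ 0 * (((r+1).choose 0 : ℕ) : ℤ) * ((B + 0).choose N : ℤ) :=
    Finset.sum_range_succ' _ (r + 1)
  rw [this]
  have e1 : ∀ b, (-1 : ℤ) ^ (b + 1) * ((r + 1).choose (b + 1) : ℤ) * ((B + (b + 1)).choose N : ℤ)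
      = -((-1 : ℤ) ^ b * (r.choose b : ℤ) * (((B + 1) + b).choose N : ℤ))
        - (-1 : ℤ) ^ b * (r.choose (b + 1) : ℤ) * ((B + (b + 1)).choose N : ℤ) := by
    intro b
    rw [Nat.choose_succ_succ]
    have hb : B + (b + 1) = (B + 1) + b := by ring
    rw [hb]
    push_cast
    ring
  rw [Finset.sum_congr rfl fun b _ => e1 b, Finset.sum_sub_distrib, hW]
  rw [Finset.sum_neg_distrib]
  simp only [pow_zero, Nat.choose_zero_right, Nat.cast_one, one_mul, add_zero]
  have : ∑ b ∈ Finset.range (r + 1),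
      (-1 : ℤ) ^ b * (r.choose b : ℤ) * (((B + 1) + b).choose N : ℤ) = Sv r (B + 1) N := rfl
  rw [this]; ring

private lemma one_var (r : ℕ) : ∀ (B N : ℕ),
    ∑ b ∈ Finset.range (r + 1), (-1 : ℤ) ^ b * (r.choose b : ℤ) * ((B + b).choose N : ℤ)
    = (-1 : ℤ) ^ r * (if r ≤ N then (B.choose (N - r) : ℤ) else 0) := by
  have main : ∀ r B N, Sv r B N
      = (-1 : ℤ) ^ r * (if r ≤ N then (B.choose (N - r) : ℤ) else 0) := by
    intro r
    induction r with
    | zero => intro B N; simp [Sv]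
    | succ r ih =>
      intro B N
      rw [Sv_succ, ih, ih]
      by_cases h : r + 1 ≤ N
      · have hr : r ≤ N := by omega
        have hk : N - r = (N - (r + 1)) + 1 := by omega
        simp only [if_pos h, if_pos hr, hk, Nat.choose_succ_succ (B)]
        push_cast
        ring
      · by_cases h' : r ≤ N
        · have : N - r = 0 := by omega
          simp [h, h', this]
        · simp [h, h']
  exact main r

private lemma multi_fin : ∀ (n : ℕ) (f : Fin n → ℕ) (B N : ℕ),
    ∑ b ∈ Fintype.piFinset (fun i => Finset.range (f i + 1)),
      (-1 : ℤ) ^ (∑ i, b i) * ((B + ∑ i, b i).choose N : ℤ) * ∏ i, ((f i).choose (b i) : ℤ)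
    = (-1 : ℤ) ^ (∑ i, f i) *
        (if (∑ i, f i) ≤ N then (B.choose (N - ∑ i, f i) : ℤ) else 0) := by
  intro n
  induction n with
  | zero =>
    intro f B N
    simp
  | succ n ih =>
    intro f B N
    have hpi : Fintype.piFinset (fun i : Fin (n+1) => Finset.range (f i + 1)) =
        ((Finset.range (f 0 + 1)) ×ˢ
          Fintype.piFinset (fun i : Fin n => Finset.range (f i.succ + 1))).map
          (Fin.consEquiv (fun _ : Fin (n+1) => ℕ)).toEmbedding := by
      have := Finset.filter_piFinset_eq_map_consEquiv
        (fun i : Fin (n+1) => Finset.range (f i + 1)) (fun _ => True)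
      simp at this
      exact this
    rw [hpi, Finset.sum_map, Finset.sum_product]
    simp only [Equiv.coe_toEmbedding]
    have key : ∀ x ∈ Finset.range (f 0 + 1),
        ∑ y ∈ Fintype.piFinset (fun i : Fin n => Finset.range (f i.succ + 1)),
          (-1 : ℤ) ^ (∑ i, (Fin.consEquiv (fun _ : Fin (n+1) => ℕ)) (x, y) i) *
            ((B + ∑ i, (Fin.consEquiv (fun _ : Fin (n+1) => ℕ)) (x, y) i).choose N : ℤ) *
            ∏ i, ((f i).choose ((Fin.consEquiv (fun _ : Fin (n+1) => ℕ)) (x, y) i) : ℤ)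
        = (-1 : ℤ) ^ x * ((f 0).choose x : ℤ) *
            ((-1 : ℤ) ^ (∑ i : Fin n, f i.succ) *
              (if (∑ i : Fin n, f i.succ) ≤ N
                then (((B + x).choose (N - ∑ i : Fin n, f i.succ)) : ℤ) else 0)) := by
      intro x _
      rw [← ih (fun i => f i.succ) (B + x) N, Finset.mul_sum]
      refine Finset.sum_congr rfl fun y _ => ?_
      have hsum : ∑ i, (Fin.consEquiv (fun _ : Fin (n+1) => ℕ)) (x, y) i
          = x + ∑ i : Fin n, y i := by
        simp [Fin.consEquiv, Fin.sum_univ_succ]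
      have hprod : ∏ i, ((f i).choose ((Fin.consEquiv (fun _ : Fin (n+1) => ℕ)) (x, y) i) : ℤ)
          = ((f 0).choose x : ℤ) * ∏ i : Fin n, ((f i.succ).choose (y i) : ℤ) := by
        simp [Fin.consEquiv, Fin.prod_univ_succ]
      rw [hsum, hprod]
      have : B + (x + ∑ i : Fin n, y i) = B + x + ∑ i : Fin n, y i := by ring
      rw [this, pow_add]
      ring
    rw [Finset.sum_congr rfl key]
    set T := ∑ i : Fin n, f i.succ with hT
    have hsucc : ∑ i : Fin (n+1), f i = f 0 + T := by rw [Fin.sum_univ_succ]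
    rw [hsucc]
    by_cases h : T ≤ N
    · simp only [if_pos h]
      have h1 : ∑ x ∈ Finset.range (f 0 + 1),
          (-1 : ℤ) ^ x * ((f 0).choose x : ℤ) *
            ((-1 : ℤ) ^ T * (((B + x).choose (N - T)) : ℤ))
          = (-1 : ℤ) ^ T * ∑ x ∈ Finset.range (f 0 + 1),
              (-1 : ℤ) ^ x * ((f 0).choose x : ℤ) * (((B + x).choose (N - T)) : ℤ) := by
        rw [Finset.mul_sum]
        exact Finset.sum_congr rfl fun x _ => by ring
      rw [h1, one_var (f 0) B (N - T)]
      by_cases h2 : f 0 ≤ N - T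
      · have h3 : f 0 + T ≤ N := by omega
        have h4 : N - T - f 0 = N - (f 0 + T) := by omega
        rw [if_pos h2, if_pos h3, h4, pow_add]
        ring
      · have h3 : ¬ (f 0 + T ≤ N) := by omega
        rw [if_neg h2, if_neg h3]
        ring
    · have h3 : ¬ (f 0 + T ≤ N) := by omega
      rw [if_neg h3]
      simp [if_neg h]

private lemma multi (ι : Type*) [Fintype ι] [DecidableEq ι] (f : ι → ℕ) (B N : ℕ) :
    ∑ b ∈ Fintype.piFinset (fun i => Finset.range (f i + 1)),
      (-1 : ℤ) ^ (∑ i, b i) * ((B + ∑ i, b i).choose N : ℤ) * ∏ i, ((f i).choose (b i) : ℤ)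
    = (-1 : ℤ) ^ (∑ i, f i) *
        (if (∑ i, f i) ≤ N then (B.choose (N - ∑ i, f i) : ℤ) else 0) := by
  classical
  let e := Fintype.equivFin ι
  have hRsum : ∑ j, f (e.symm j) = ∑ i, f i := Equiv.sum_comp e.symm f
  have hL : ∑ b ∈ Fintype.piFinset (fun i : ι => Finset.range (f i + 1)),
      (-1 : ℤ) ^ (∑ i, b i) * ((B + ∑ i, b i).choose N : ℤ) * ∏ i, ((f i).choose (b i) : ℤ)
      = ∑ y ∈ Fintype.piFinset (fun j : Fin (Fintype.card ι) => Finset.range (f (e.symm j) + 1)),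
        (-1 : ℤ) ^ (∑ j, y j) * ((B + ∑ j, y j).choose N : ℤ) *
          ∏ j, ((f (e.symm j)).choose (y j) : ℤ) := by
    refine Finset.sum_nbij' (i := fun b => b ∘ e.symm) (j := fun y => y ∘ e) ?_ ?_ ?_ ?_ ?_
    · intro b hb
      simp only [Fintype.mem_piFinset] at hb ⊢
      intro j; exact hb (e.symm j)
    · intro y hy
      simp only [Fintype.mem_piFinset] at hy ⊢
      intro i
      have := hy (e i)
      simpa using this
    · intro b _; funext i; simp
    · intro y _; funext j; simp
    · intro b _
      have h1 : ∑ j, (b ∘ e.symm) j = ∑ i, b i := Equiv.sum_comp e.symm b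
      have h2 : ∏ j, ((f (e.symm j)).choose ((b ∘ e.symm) j) : ℤ)
          = ∏ i, ((f i).choose (b i) : ℤ) :=
        Equiv.prod_comp e.symm (fun i => ((f i).choose (b i) : ℤ))
      simp only [Function.comp_apply] at h1 h2 ⊢
      rw [h1, h2]
  rw [hL, multi_fin (Fintype.card ι) (fun j => f (e.symm j)) B N, hRsum]

/-- The index set `S(c) = {(r,j) : r ≥ 1, 1 ≤ j ≤ c_r}` of a finitely supported
`c : ℕ → ℕ` (with `c 0 = 0`). -/
def Sc (c : ℕ →₀ ℕ) : Finset (ℕ × ℕ) :=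
  c.support.biUnion fun r => (Finset.Icc 1 (c r)).image fun j => (r, j)

/-- For every finitely supported `c : {1,2,…} → ℕ` and all `B, M ∈ ℕ`:
`Σ_{b′ ∈ ℕ^{S(c)}} (−1)^{|b′|}·C(B+|b′|, M+|c|)·∏_{(r,j)∈S(c)} C(r, b′_{r,j})
  = (−1)^{‖c‖}·C(B, M+|c|−‖c‖)`,
the sum being finite since `C(r, b′_{r,j}) = 0` for `b′_{r,j} > r`, and the
right-hand binomial coefficient being `0` if `M+|c|−‖c‖ < 0`. -/
theorem stmt_14 (c : ℕ →₀ ℕ) (hc : c 0 = 0) (B M : ℕ) :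
    (∑ᶠ b' : {x // x ∈ Sc c} → ℕ,
        (-1 : ℤ) ^ (∑ p : {x // x ∈ Sc c}, b' p) *
          ((B + ∑ p : {x // x ∈ Sc c}, b' p).choose (M + ∑ r ∈ c.support, c r) : ℤ) *
          ∏ p : {x // x ∈ Sc c}, ((p : ℕ × ℕ).1.choose (b' p) : ℤ)) =
      (-1 : ℤ) ^ (∑ r ∈ c.support, r * c r) *
        (if (∑ r ∈ c.support, r * c r) ≤ M + ∑ r ∈ c.support, c r then
          (B.choose ((M + ∑ r ∈ c.support, c r) - ∑ r ∈ c.support, r * c r) : ℤ)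
        else 0) := by
  classical
  set N := M + ∑ r ∈ c.support, c r with hN
  set ι := {x // x ∈ Sc c}
  -- the summand has support inside the piFinset
  have hsupp : (Function.support fun b' : ι → ℕ =>
      (-1 : ℤ) ^ (∑ p : ι, b' p) * ((B + ∑ p : ι, b' p).choose N : ℤ) *
        ∏ p : ι, ((p : ℕ × ℕ).1.choose (b' p) : ℤ)) ⊆
      ↑(Fintype.piFinset (fun p : ι => Finset.range ((p : ℕ × ℕ).1 + 1))) := by
    intro b' hb'
    by_contra hmem
    simp only [Finset.coe_sort_coe, Finset.mem_coe, Fintype.mem_piFinset,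
      Finset.mem_range, not_forall, not_lt] at hmem
    obtain ⟨p, hp⟩ := hmem
    have : ((p : ℕ × ℕ).1.choose (b' p) : ℤ) = 0 := by
      rw [Nat.choose_eq_zero_of_lt (by omega)]
      simp
    apply hb'
    simp only [Function.mem_support] at *
    rw [Finset.prod_eq_zero (Finset.mem_univ p) this]
    ring
  rw [finsum_eq_sum_of_support_subset _ hsupp]
  have := multi ι (fun p => (p : ℕ × ℕ).1) B N
  rw [this]
  -- compute the sum of first coordinates
  have hfst : ∑ p : ι, (p : ℕ × ℕ).1 = ∑ r ∈ c.support, r * c r := by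
    rw [Finset.sum_coe_sort (Sc c) (fun x => x.1)]
    rw [Sc, Finset.sum_biUnion]
    · refine Finset.sum_congr rfl fun r _ => ?_
      rw [Finset.sum_image (by intro a _ b _ h; exact (Prod.mk.injEq r a r b).mp h |>.2)]
      simp [Finset.sum_const, Nat.card_Icc, mul_comm]
    · intro r _ r' _ hrr'
      simp only [Function.onFun]
      rw [Finset.disjoint_left]
      intro x hx hx'
      simp only [Finset.mem_image, Finset.mem_Icc] at hx hx'
      obtain ⟨a, _, rfl⟩ := hx
      obtain ⟨b, _, hb⟩ := hx'
      exact hrr' (by injection hb with h1 _; exact h1.symm)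
  rw [hfst]
end

section
/- With the convention that a! = 0 for a < 0: for all b′, b₋″, b₊″, ε₋, ε₊ ∈ ℕ one has (b₋″+ε₋−b′)! · (b₊″+ε₊+1+b′)! ≤ 5^{b₋″+b₊″+ε₋+ε₊+1} · ε₋! · ε₊! · b₋″! · b₊″!, where b₋″+ε₋−b′ is computed in ℤ (so the left-hand side is 0 when b′ > b₋″+ε₋). -/
/-- Factorial extended to `ℤ` by `a! = 0` for `a < 0`. -/
def zfact (a : ℤ) : ℕ := if a < 0 then 0 else a.toNat.factorial

private lemma key_step_s19 (n x P : ℕ) (hx : n + 1 ≤ 5 * (x + 1))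
    (h : n.factorial ≤ 5 ^ n * (x.factorial * P)) :
    (n + 1).factorial ≤ 5 ^ (n + 1) * ((x + 1).factorial * P) := by
  have h1 : (n + 1).factorial = (n + 1) * n.factorial := rfl
  have h2 : (x + 1).factorial = (x + 1) * x.factorial := rfl
  calc (n + 1).factorial = (n + 1) * n.factorial := h1
    _ ≤ (n + 1) * (5 ^ n * (x.factorial * P)) := Nat.mul_le_mul_left _ h
    _ ≤ (5 * (x + 1)) * (5 ^ n * (x.factorial * P)) := Nat.mul_le_mul_right _ hx
    _ = 5 ^ (n + 1) * ((x + 1) * x.factorial * P) := by ring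
    _ = 5 ^ (n + 1) * ((x + 1).factorial * P) := by rw [h2]

private lemma five_fact : ∀ n a b c d e : ℕ, a + b + c + d + e = n →
    n.factorial ≤ 5 ^ n *
      (a.factorial * b.factorial * c.factorial * d.factorial * e.factorial) := by
  intro n
  induction n with
  | zero =>
    intro a b c d e h
    have : a = 0 ∧ b = 0 ∧ c = 0 ∧ d = 0 ∧ e = 0 := by omega
    obtain ⟨rfl, rfl, rfl, rfl, rfl⟩ := this
    simp [Nat.factorial]
  | succ n ih =>
    intro a b c d e h
    have hmax : n + 1 ≤ 5 * a ∨ n + 1 ≤ 5 * b ∨ n + 1 ≤ 5 * c ∨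
        n + 1 ≤ 5 * d ∨ n + 1 ≤ 5 * e := by omega
    rcases hmax with hm | hm | hm | hm | hm
    · obtain ⟨a', rfl⟩ : ∃ a', a = a' + 1 := ⟨a - 1, by omega⟩
      have := key_step_s19 n a'
        (b.factorial * c.factorial * d.factorial * e.factorial) (by omega)
        (by
          have := ih a' b c d e (by omega)
          calc n.factorial ≤ 5 ^ n * (a'.factorial * b.factorial * c.factorial
              * d.factorial * e.factorial) := this
            _ = 5 ^ n * (a'.factorial *
              (b.factorial * c.factorial * d.factorial * e.factorial)) := by ring)
      calc (n+1).factorial ≤ 5 ^ (n+1) * ((a'+1).factorial *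
            (b.factorial * c.factorial * d.factorial * e.factorial)) := this
        _ = 5 ^ (n+1) * ((a'+1).factorial * b.factorial * c.factorial
            * d.factorial * e.factorial) := by ring
    · obtain ⟨b', rfl⟩ : ∃ b', b = b' + 1 := ⟨b - 1, by omega⟩
      have := key_step_s19 n b'
        (a.factorial * c.factorial * d.factorial * e.factorial) (by omega)
        (by
          have := ih a b' c d e (by omega)
          calc n.factorial ≤ 5 ^ n * (a.factorial * b'.factorial * c.factorial
              * d.factorial * e.factorial) := this
            _ = 5 ^ n * (b'.factorial *
              (a.factorial * c.factorial * d.factorial * e.factorial)) := by ring)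
      calc (n+1).factorial ≤ 5 ^ (n+1) * ((b'+1).factorial *
            (a.factorial * c.factorial * d.factorial * e.factorial)) := this
        _ = 5 ^ (n+1) * (a.factorial * (b'+1).factorial * c.factorial
            * d.factorial * e.factorial) := by ring
    · obtain ⟨c', rfl⟩ : ∃ c', c = c' + 1 := ⟨c - 1, by omega⟩
      have := key_step_s19 n c'
        (a.factorial * b.factorial * d.factorial * e.factorial) (by omega)
        (by
          have := ih a b c' d e (by omega)
          calc n.factorial ≤ 5 ^ n * (a.factorial * b.factorial * c'.factorial
              * d.factorial * e.factorial) := this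
            _ = 5 ^ n * (c'.factorial *
              (a.factorial * b.factorial * d.factorial * e.factorial)) := by ring)
      calc (n+1).factorial ≤ 5 ^ (n+1) * ((c'+1).factorial *
            (a.factorial * b.factorial * d.factorial * e.factorial)) := this
        _ = 5 ^ (n+1) * (a.factorial * b.factorial * (c'+1).factorial
            * d.factorial * e.factorial) := by ring
    · obtain ⟨d', rfl⟩ : ∃ d', d = d' + 1 := ⟨d - 1, by omega⟩
      have := key_step_s19 n d'
        (a.factorial * b.factorial * c.factorial * e.factorial) (by omega)
        (by
          have := ih a b c d' e (by omega)
          calc n.factorial ≤ 5 ^ n * (a.factorial * b.factorial * c.factorial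
              * d'.factorial * e.factorial) := this
            _ = 5 ^ n * (d'.factorial *
              (a.factorial * b.factorial * c.factorial * e.factorial)) := by ring)
      calc (n+1).factorial ≤ 5 ^ (n+1) * ((d'+1).factorial *
            (a.factorial * b.factorial * c.factorial * e.factorial)) := this
        _ = 5 ^ (n+1) * (a.factorial * b.factorial * c.factorial
            * (d'+1).factorial * e.factorial) := by ring
    · obtain ⟨e', rfl⟩ : ∃ e', e = e' + 1 := ⟨e - 1, by omega⟩
      have := key_step_s19 n e'
        (a.factorial * b.factorial * c.factorial * d.factorial) (by omega)
        (by
          have := ih a b c d e' (by omega)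
          calc n.factorial ≤ 5 ^ n * (a.factorial * b.factorial * c.factorial
              * d.factorial * e'.factorial) := this
            _ = 5 ^ n * (e'.factorial *
              (a.factorial * b.factorial * c.factorial * d.factorial)) := by ring)
      calc (n+1).factorial ≤ 5 ^ (n+1) * ((e'+1).factorial *
            (a.factorial * b.factorial * c.factorial * d.factorial)) := this
        _ = 5 ^ (n+1) * (a.factorial * b.factorial * c.factorial
            * d.factorial * (e'+1).factorial) := by ring

/-- For all `b′, b₋″, b₊″, ε₋, ε₊ ∈ ℕ`:
`(b₋″+ε₋−b′)!·(b₊″+ε₊+1+b′)! ≤ 5^{b₋″+b₊″+ε₋+ε₊+1}·ε₋!·ε₊!·b₋″!·b₊″!`,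
where `b₋″+ε₋−b′` is computed in `ℤ`. -/
theorem stmt_19 (b' bm bp εm εp : ℕ) :
    zfact ((bm : ℤ) + (εm : ℤ) - (b' : ℤ)) * (bp + εp + 1 + b').factorial ≤
      5 ^ (bm + bp + εm + εp + 1) * εm.factorial * εp.factorial *
        bm.factorial * bp.factorial := by
  by_cases hneg : (bm : ℤ) + (εm : ℤ) - (b' : ℤ) < 0
  · simp [zfact, hneg]
  · push_neg at hneg
    have hb : b' ≤ bm + εm := by exact_mod_cast sub_nonneg.mp hneg
    have htn : ((bm : ℤ) + (εm : ℤ) - (b' : ℤ)).toNat = bm + εm - b' := by omega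
    rw [zfact, if_neg (not_lt.mpr hneg), htn]
    have h1 : (bm + εm - b').factorial * (bp + εp + 1 + b').factorial ≤
        (bm + bp + εm + εp + 1).factorial := by
      have hs : (bm + εm - b') + (bp + εp + 1 + b') = bm + bp + εm + εp + 1 := by omega
      rw [← hs]
      exact Nat.le_of_dvd (Nat.factorial_pos _)
        (Nat.factorial_mul_factorial_dvd_factorial_add _ _)
    have h2 : (bm + bp + εm + εp + 1).factorial ≤ 5 ^ (bm + bp + εm + εp + 1) *
        (εm.factorial * εp.factorial * bm.factorial * bp.factorial *
          Nat.factorial 1) :=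
      five_fact _ εm εp bm bp 1 (by omega)
    calc (bm + εm - b').factorial * (bp + εp + 1 + b').factorial ≤
          (bm + bp + εm + εp + 1).factorial := h1
      _ ≤ 5 ^ (bm + bp + εm + εp + 1) * (εm.factorial * εp.factorial *
          bm.factorial * bp.factorial * Nat.factorial 1) := h2
      _ = 5 ^ (bm + bp + εm + εp + 1) * εm.factorial * εp.factorial *
          bm.factorial * bp.factorial := by
          simp [Nat.factorial]; ring
end
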